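/- arXiv:math/0207229 — 4 statements merged into one kernel-verified Lean document; each statement's English description precedes it below -/
import Mathlib

section
/- Let ψ be a holomorphic function mapping the upper half-plane H = {z : Im z > 0} into itself. Then for all r ≥ 1 and θ ∈ (0, π), one has (1/5)|ψ(i)| (sin θ)/r < |ψ(r e^{iθ})| < 5 |ψ(i)| r / sin θ. -/
open Complex Set Metric
set_option maxHeartbeats 4000000

/-- Carathéodory inequality: if `ψ` maps the upper half-plane holomorphically into
itself, then for `r ≥ 1` and `θ ∈ (0, π)`,
`(1/5)|ψ(i)| sin θ / r < |ψ(r e^{iθ})| < 5 |ψ(i)| r / sin θ`. -/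
theorem caratheodory_halfplane (ψ : ℂ → ℂ)
    (hψ : DifferentiableOn ℂ ψ {z : ℂ | 0 < z.im})
    (hmaps : Set.MapsTo ψ {z : ℂ | 0 < z.im} {z : ℂ | 0 < z.im})
    (r θ : ℝ) (hr : 1 ≤ r) (hθ : θ ∈ Set.Ioo 0 Real.pi) :
    (1 / 5) * ‖ψ I‖ * Real.sin θ / r
        < ‖ψ ((r : ℂ) * Complex.exp (θ * I))‖ ∧
      ‖ψ ((r : ℂ) * Complex.exp (θ * I))‖
        < 5 * ‖ψ I‖ * r / Real.sin θ := by
  obtain ⟨hθ0, hθπ⟩ := hθ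
  have hs : 0 < Real.sin θ := Real.sin_pos_of_pos_of_lt_pi hθ0 hθπ
  have hs1 : Real.sin θ ≤ 1 := Real.sin_le_one θ
  have hr0 : (0:ℝ) < r := lt_of_lt_of_le one_pos hr
  set z : ℂ := (r : ℂ) * Complex.exp (θ * I) with hz
  have hzre : z.re = r * Real.cos θ := by
    simp [hz, Complex.exp_ofReal_mul_I_re, Complex.exp_ofReal_mul_I_im]
  have hzim : z.im = r * Real.sin θ := by
    simp [hz, Complex.exp_ofReal_mul_I_re, Complex.exp_ofReal_mul_I_im]
  have hzH : 0 < z.im := by rw [hzim]; positivity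
  set a : ℂ := ψ I with ha
  have haH : 0 < a.im := hmaps (by simp [Set.mem_setOf_eq])
  have hn : 0 < ‖a‖ := by
    apply norm_pos_iff.2; intro h; rw [h] at haH; simp at haH
  -- the Cayley transform
  set C : ℂ → ℂ := fun ζ => I * (1 + ζ) / (1 - ζ) with hC
  have hden : ∀ ζ : ℂ, ζ ∈ ball (0:ℂ) 1 → (1 : ℂ) - ζ ≠ 0 := by
    intro ζ hζ h
    rw [mem_ball, dist_zero_right] at hζ
    have : ζ = 1 := by linear_combination -h
    rw [this] at hζ; simp at hζ
  have hCmaps : Set.MapsTo C (ball (0:ℂ) 1) {z : ℂ | 0 < z.im} := by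
    intro ζ hζ
    have h1 : (1 : ℂ) - ζ ≠ 0 := hden ζ hζ
    rw [mem_ball, dist_zero_right] at hζ
    have hnsq : Complex.normSq ζ < 1 := by
      have := Complex.sq_norm ζ; nlinarith [norm_nonneg ζ]
    have hnsqd : 0 < Complex.normSq (1 - ζ) := Complex.normSq_pos.2 h1
    simp only [Set.mem_setOf_eq, hC]
    rw [Complex.div_im]
    have h2 : (I * (1 + ζ)).im = 1 + ζ.re := by simp
    have h3 : (I * (1 + ζ)).re = -ζ.im := by simp
    rw [h2, h3]
    have h4 : ((1:ℂ) - ζ).re = 1 - ζ.re := by simp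
    have h5 : ((1:ℂ) - ζ).im = -ζ.im := by simp
    rw [h4, h5]
    rw [Complex.normSq_apply] at hnsq
    rw [div_sub_div_same, lt_div_iff₀ hnsqd]
    ring_nf
    nlinarith
  have hCdiff : DifferentiableOn ℂ C (ball (0:ℂ) 1) := by
    apply DifferentiableOn.div
    · exact (differentiable_const _).differentiableOn.mul
        ((differentiable_const _).add differentiable_id).differentiableOn
    · exact ((differentiable_const _).sub differentiable_id).differentiableOn
    · exact hden
  have hψC : DifferentiableOn ℂ (fun ζ => ψ (C ζ)) (ball (0:ℂ) 1) :=
    hψ.comp hCdiff hCmaps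
  have hψCim : ∀ ζ : ℂ, ζ ∈ ball (0:ℂ) 1 → 0 < (ψ (C ζ)).im := fun ζ hζ =>
    hmaps (hCmaps hζ)
  -- key: for u in H, |u - a| < |u - conj a|
  have hkey : ∀ u : ℂ, 0 < u.im → ‖u - a‖ < ‖u - (starRingEnd ℂ) a‖ := by
    intro u hu
    have h1 : Complex.normSq (u - a) < Complex.normSq (u - (starRingEnd ℂ) a) := by
      simp only [Complex.normSq_apply, Complex.sub_re, Complex.sub_im, Complex.conj_re,
        Complex.conj_im]
      nlinarith [mul_pos hu haH]
    have := Complex.sq_norm (u - a)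
    have := Complex.sq_norm (u - (starRingEnd ℂ) a)
    nlinarith [norm_nonneg (u - a), norm_nonneg (u - (starRingEnd ℂ) a)]
  have hne : ∀ u : ℂ, 0 < u.im → u - (starRingEnd ℂ) a ≠ 0 := by
    intro u hu h
    have : u = (starRingEnd ℂ) a := by linear_combination h
    rw [this] at hu; simp [Complex.conj_im] at hu; linarith
  -- define g
  set g : ℂ → ℂ := fun ζ => (ψ (C ζ) - a) / (ψ (C ζ) - (starRingEnd ℂ) a) with hg
  have hgdiff : DifferentiableOn ℂ g (ball (0:ℂ) 1) := by
    apply DifferentiableOn.div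
    · exact hψC.sub (differentiable_const _).differentiableOn
    · exact hψC.sub (differentiable_const _).differentiableOn
    · exact fun ζ hζ => hne _ (hψCim ζ hζ)
  have hgmaps : Set.MapsTo g (ball (0:ℂ) 1) (ball (0:ℂ) 1) := by
    intro ζ hζ
    rw [mem_ball, dist_zero_right, hg]
    simp only [norm_div]
    rw [div_lt_one (by exact (norm_pos_iff.2 (hne _ (hψCim ζ hζ))))]
    exact hkey _ (hψCim ζ hζ)
  have hC0 : C 0 = I := by simp [hC]
  have hg0 : g 0 = 0 := by simp [hg, hC0, ← ha]
  -- the point ζ₀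
  set ζ₀ : ℂ := (z - I) / (z + I) with hζ₀
  have hzI : z + I ≠ 0 := by
    intro h
    have h' := congrArg Complex.im h
    simp [Complex.add_im] at h'
    linarith [hzH]
  have hζ₀mem : ζ₀ ∈ ball (0:ℂ) 1 := by
    rw [mem_ball, dist_zero_right, hζ₀, norm_div,
      div_lt_one (norm_pos_iff.2 hzI)]
    have h1 : Complex.normSq (z - I) < Complex.normSq (z + I) := by
      simp only [Complex.normSq_apply, Complex.sub_re, Complex.sub_im, Complex.add_re,
        Complex.add_im, Complex.I_re, Complex.I_im]
      nlinarith [hzH]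
    have := Complex.sq_norm (z - I)
    have := Complex.sq_norm (z + I)
    nlinarith [norm_nonneg (z - I), norm_nonneg (z + I)]
  have hCζ₀ : C ζ₀ = z := by
    rw [hC, hζ₀]
    have h1 : (1:ℂ) - (z - I)/(z + I) ≠ 0 := hden _ hζ₀mem
    field_simp
    ring
  -- Schwarz lemma
  have hsch := Complex.dist_le_dist_of_mapsTo_ball_self hgdiff
    (hgmaps.mono_right (by rw [hg0]; exact ball_subset_closedBall)) hζ₀mem
  rw [hg0, dist_zero_right, dist_zero_right] at hsch
  set w : ℂ := ψ z with hw
  have hwH : 0 < w.im := hmaps hzH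
  have hm : 0 < ‖w‖ := by
    apply norm_pos_iff.2; intro h; rw [h] at hwH; simp at hwH
  have hgval : g ζ₀ = (w - a) / (w - (starRingEnd ℂ) a) := by rw [hg]; simp only [hCζ₀, ← hw]
  rw [hgval, norm_div, div_le_iff₀ (norm_pos_iff.2 (hne _ hwH))] at hsch
  -- now pure real arithmetic
  set m := ‖w‖ with hm'
  set n := ‖a‖ with hn'
  set p := ‖ζ₀‖ with hp'
  set s := Real.sin θ with hs'
  have hp0 : 0 ≤ p := norm_nonneg _
  have hp1 : p < 1 := by rwa [mem_ball, dist_zero_right] at hζ₀mem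
  -- |w - conj a| ≤ m + n
  have htri1 : ‖w - (starRingEnd ℂ) a‖ ≤ m + n := by
    calc ‖w - (starRingEnd ℂ) a‖ ≤ ‖w‖ + ‖(starRingEnd ℂ) a‖ :=
          norm_sub_le _ _
      _ = m + n := by rw [Complex.norm_conj]
  have htri0 := abs_le.1 (abs_norm_sub_norm_le w a)
  have htri2 : m - n ≤ ‖w - a‖ := by linarith [htri0.2]
  have htri3 : n - m ≤ ‖w - a‖ := by linarith [htri0.1]
  have h1 : m - n ≤ p * (m + n) := by
    calc m - n ≤ ‖w - a‖ := htri2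
      _ ≤ p * ‖w - (starRingEnd ℂ) a‖ := hsch
      _ ≤ p * (m + n) := by nlinarith [htri1]
  have h2 : n - m ≤ p * (m + n) := by
    calc n - m ≤ ‖w - a‖ := htri3
      _ ≤ p * ‖w - (starRingEnd ℂ) a‖ := hsch
      _ ≤ p * (m + n) := by nlinarith [htri1]
  -- p² * A = B
  have hkey2 : p ^ 2 * (r ^ 2 + 1 + 2 * r * s) = r ^ 2 + 1 - 2 * r * s := by
    have hA : Complex.normSq (z + I) = r ^ 2 + 1 + 2 * r * s := by
      simp only [Complex.normSq_apply, Complex.add_re, Complex.add_im, Complex.I_re,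
        Complex.I_im, hzre, hzim]
      have := Real.sin_sq_add_cos_sq θ
      nlinarith
    have hB : Complex.normSq (z - I) = r ^ 2 + 1 - 2 * r * s := by
      simp only [Complex.normSq_apply, Complex.sub_re, Complex.sub_im, Complex.I_re,
        Complex.I_im, hzre, hzim]
      have := Real.sin_sq_add_cos_sq θ
      nlinarith
    have hpA : p ^ 2 = Complex.normSq (z - I) / Complex.normSq (z + I) := by
      rw [hp', hζ₀, norm_div, div_pow, Complex.sq_norm, Complex.sq_norm]
    rw [hpA, hA, hB, div_mul_cancel₀]
    positivity
  have hA4 : r ^ 2 + 1 + 2 * r * s ≤ 4 * r ^ 2 := by nlinarith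
  constructor
  · -- lower bound : (1/5) * n * s / r < m
    rw [div_lt_iff₀ hr0]
    -- n(1-p) ≤ m(1+p) from h2 ; then n(1-p²) ≤ 2n(1-p) ≤ 4m ; n·4rs ≤ 4mA ≤ 16mr²
    have e1 : n * (1 - p) ≤ m * (1 + p) := by nlinarith [h2]
    have e2 : n * (1 - p ^ 2) ≤ 4 * m := by
      nlinarith [mul_le_mul_of_nonneg_right e1 (by linarith : (0:ℝ) ≤ 1 + p),
        mul_nonneg hm.le (mul_nonneg (by linarith : (0:ℝ) ≤ 1 - p) (by linarith : (0:ℝ) ≤ 3 + p))]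
    have e3 : n * (4 * r * s) ≤ 4 * m * (r ^ 2 + 1 + 2 * r * s) := by
      have : n * ((1 - p ^ 2) * (r ^ 2 + 1 + 2 * r * s)) ≤ 4 * m * (r ^ 2 + 1 + 2 * r * s) := by
        have hApos : (0:ℝ) < r ^ 2 + 1 + 2 * r * s := by positivity
        nlinarith [e2, hApos]
      calc n * (4 * r * s) = n * ((1 - p ^ 2) * (r ^ 2 + 1 + 2 * r * s)) := by
            rw [show (1 - p ^ 2) * (r ^ 2 + 1 + 2 * r * s) = 4 * r * s by linarith [hkey2]]
        _ ≤ 4 * m * (r ^ 2 + 1 + 2 * r * s) := this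
    have e4 : n * s * (4 * r) ≤ 4 * m * (4 * r ^ 2) := by nlinarith [e3, hA4, hm.le]
    have e5 : n * s ≤ 4 * m * r := by nlinarith [e4, hr0]
    nlinarith [e5, mul_pos hm hr0]
  · -- upper bound : m < 5 * n * r / s
    rw [lt_div_iff₀ hs]
    have e1 : m * (1 - p) ≤ n * (1 + p) := by nlinarith [h1]
    have e2 : m * (1 - p ^ 2) ≤ 4 * n := by
      nlinarith [mul_le_mul_of_nonneg_right e1 (by linarith : (0:ℝ) ≤ 1 + p),
        mul_nonneg hn.le (mul_nonneg (by linarith : (0:ℝ) ≤ 1 - p) (by linarith : (0:ℝ) ≤ 3 + p))]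
    have e3 : m * (4 * r * s) ≤ 4 * n * (r ^ 2 + 1 + 2 * r * s) := by
      have hApos : (0:ℝ) < r ^ 2 + 1 + 2 * r * s := by positivity
      have : m * ((1 - p ^ 2) * (r ^ 2 + 1 + 2 * r * s)) ≤ 4 * n * (r ^ 2 + 1 + 2 * r * s) := by
        nlinarith [e2, hApos]
      calc m * (4 * r * s) = m * ((1 - p ^ 2) * (r ^ 2 + 1 + 2 * r * s)) := by
            rw [show (1 - p ^ 2) * (r ^ 2 + 1 + 2 * r * s) = 4 * r * s by linarith [hkey2]]
        _ ≤ 4 * n * (r ^ 2 + 1 + 2 * r * s) := this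
    have e4 : m * s * (4 * r) ≤ 4 * n * (4 * r ^ 2) := by nlinarith [e3, hA4, hn.le]
    have e5 : m * s ≤ 4 * n * r := by nlinarith [e4, hr0]
    nlinarith [e5, mul_pos hn hr0]
end

section
/- Let L be meromorphic in the plane, holomorphic on the open upper half-plane H, real on ℝ, with all poles real. Then every connected component C of Y = {z ∈ H : Im L(z) > 0} is unbounded. -/
open Complex Filter

/-- Near a (real, simple, positive-residue) pole of `L`, there are no points of the
upper half-plane where `Im L > 0`. Hence non-analytic points are not in the closure of `Y`. -/
lemma pole_not_in_closure_Y (L : ℂ → ℂ)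
    (hmer : MeromorphicOn L Set.univ)
    (hreal : ∀ x : ℝ, AnalyticAt ℂ L (x : ℂ) → (L x).im = 0)
    (hpoles : ∀ z : ℂ, ¬ AnalyticAt ℂ L z →
      z.im = 0 ∧ ∃ r : ℝ, 0 < r ∧ ∃ g : ℂ → ℂ, AnalyticAt ℂ g z ∧
        ∀ᶠ w in nhdsWithin z {z}ᶜ, L w = (r : ℂ) / (w - z) + g w)
    (x : ℂ) (hna : ¬ AnalyticAt ℂ L x) :
    x ∉ closure {z : ℂ | 0 < z.im ∧ 0 < (L z).im} := by
  obtain ⟨hxim, r, hr, g, hg, hEq⟩ := hpoles x hna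
  have hmx : MeromorphicAt L x := hmer x (Set.mem_univ x)
  have hEv : ∀ᶠ w in nhdsWithin x {x}ᶜ,
      AnalyticAt ℂ L w ∧ L w = (r : ℂ) / (w - x) + g w :=
    hmx.eventually_analyticAt.and hEq
  rw [eventually_nhdsWithin_iff, Metric.eventually_nhds_iff] at hEv
  obtain ⟨ε, hε, hball⟩ := hEv
  -- Lipschitz bound for g near x
  obtain ⟨K, t, ht, hlip⟩ := (hg.contDiffAt (n := 1)).exists_lipschitzOnWith
  obtain ⟨δ₁, hδ₁, hδ₁t⟩ := Metric.mem_nhds_iff.mp ht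
  set ξ : ℝ := x.re with hξ
  have hxξ : (ξ : ℂ) = x := by
    apply Complex.ext <;> simp [hξ, hxim]
  -- g is real at real points near x (t ≠ x case from the formula, at x by continuity)
  have h0 : ∀ s : ℝ, (s : ℂ) ≠ x → dist (s : ℂ) x < ε → (g s).im = 0 := by
    intro s hs hsd
    obtain ⟨han, hfor⟩ := hball hsd hs
    have h1 : (L s).im = 0 := hreal s han
    have h2 : ((r : ℂ) / ((s : ℂ) - x)).im = 0 := by
      rw [← hxξ, ← Complex.ofReal_sub, ← Complex.ofReal_div, Complex.ofReal_im]
    have := congrArg Complex.im hfor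
    rw [Complex.add_im, h1, h2] at this
    linarith [this]
  have hgx : (g x).im = 0 := by
    have hcont : ContinuousAt (fun s : ℝ => (g (s : ℂ)).im) ξ := by
      apply Complex.continuous_im.continuousAt.comp
      apply ContinuousAt.comp _ Complex.continuous_ofReal.continuousAt
      rw [hxξ]; exact hg.continuousAt
    have htend : Tendsto (fun s : ℝ => (g (s : ℂ)).im) (nhdsWithin ξ {ξ}ᶜ)
        (nhds ((g x).im)) := by
      have : (fun s : ℝ => (g (s : ℂ)).im) ξ = (g x).im := by simp only [hxξ]
      simpa [this] using hcont.tendsto.mono_left nhdsWithin_le_nhds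
    have hev : ∀ᶠ s : ℝ in nhdsWithin ξ {ξ}ᶜ, (fun s : ℝ => (g (s : ℂ)).im) s = 0 := by
      rw [eventually_nhdsWithin_iff, Metric.eventually_nhds_iff]
      refine ⟨ε, hε, fun s hsd hs => ?_⟩
      apply h0
      · intro hc
        apply hs
        have : (s : ℂ) = (ξ : ℂ) := by rw [hxξ]; exact hc
        exact_mod_cast this
      · rw [← hxξ, Complex.dist_eq, ← Complex.ofReal_sub]
        calc ‖(((s : ℝ) - ξ : ℝ) : ℂ)‖ = |s - ξ| := by rw [Complex.norm_real, Real.norm_eq_abs]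
        _ = dist s ξ := (Real.dist_eq s ξ).symm
        _ < ε := hsd
    have h2 : Tendsto (fun s : ℝ => (g (s : ℂ)).im) (nhdsWithin ξ {ξ}ᶜ) (nhds 0) := by
      apply Tendsto.congr' (hev.mono fun s hs => hs.symm) tendsto_const_nhds
    exact tendsto_nhds_unique htend h2
  -- choose δ
  set Kr : ℝ := (K : ℝ) with hKr
  have hKr0 : 0 ≤ Kr := K.coe_nonneg
  set δ : ℝ := min ε (min δ₁ (Real.sqrt (r / (Kr + 1)))) with hδdef
  have hδpos : 0 < δ := by
    refine lt_min hε (lt_min hδ₁ (Real.sqrt_pos.mpr ?_))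
    positivity
  have hδsq : δ ^ 2 ≤ r / (Kr + 1) := by
    have h1 : δ ≤ Real.sqrt (r / (Kr + 1)) := le_trans (min_le_right _ _) (min_le_right _ _)
    calc δ ^ 2 ≤ Real.sqrt (r / (Kr + 1)) ^ 2 := by
          apply pow_le_pow_left₀ hδpos.le h1 2
      _ = r / (Kr + 1) := Real.sq_sqrt (by positivity)
  -- now suppose x ∈ closure Y, pick w ∈ Y with dist w x < δ
  intro hcl
  obtain ⟨w, hwY, hwd⟩ := Metric.mem_closure_iff.mp hcl δ hδpos
  rw [dist_comm] at hwd
  obtain ⟨hw1, hw2⟩ := hwY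
  have hwx : w ≠ x := by
    intro hc; rw [hc, hxim] at hw1; exact lt_irrefl 0 hw1
  have hwdε : dist w x < ε := lt_of_lt_of_le hwd (min_le_left _ _)
  obtain ⟨_, hfor⟩ := hball hwdε hwx
  -- Im L w = -r w.im / normSq (w - x) + Im g w
  have hnsq : Complex.normSq (w - x) = ‖w - x‖ ^ 2 := Complex.normSq_eq_norm_sq _
  have hnsq_pos : 0 < Complex.normSq (w - x) := by
    rw [Complex.normSq_pos]; exact sub_ne_zero.mpr hwx
  have him_div : ((r : ℂ) / (w - x)).im = -(r * w.im) / Complex.normSq (w - x) := by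
    rw [div_eq_mul_inv, Complex.im_ofReal_mul, Complex.inv_im, Complex.sub_im, hxim,
      sub_zero]
    ring
  have him_eq : (L w).im = -(r * w.im) / Complex.normSq (w - x) + (g w).im := by
    rw [hfor, Complex.add_im, him_div]
  -- Lipschitz bound: Im g w ≤ K * w.im
  have hw_in : w ∈ t := by
    apply hδ₁t
    rw [Metric.mem_ball]
    exact lt_of_lt_of_le hwd (le_trans (min_le_right _ _) (min_le_left _ _))
  have hre_abs : dist ((w.re : ℝ) : ℂ) x ≤ dist w x := by
    rw [Complex.dist_eq, Complex.dist_eq]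
    have h1 : ((w.re : ℝ) : ℂ) - x = ((w.re - ξ : ℝ) : ℂ) := by
      rw [← hxξ]; push_cast; ring
    rw [h1, Complex.norm_real, Real.norm_eq_abs]
    have h2 : w.re - ξ = (w - x).re := by simp [hξ, Complex.sub_re]
    rw [h2]
    exact Complex.abs_re_le_norm _
  have hre_in : ((w.re : ℝ) : ℂ) ∈ t := by
    apply hδ₁t
    rw [Metric.mem_ball]
    exact lt_of_le_of_lt hre_abs (lt_of_lt_of_le hwd
      (le_trans (min_le_right _ _) (min_le_left _ _)))
  have hgre : (g ((w.re : ℝ) : ℂ)).im = 0 := by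
    by_cases hc : ((w.re : ℝ) : ℂ) = x
    · rw [hc]; exact hgx
    · exact h0 w.re hc (lt_of_le_of_lt hre_abs hwdε)
  have hdist_re : dist w ((w.re : ℝ) : ℂ) = w.im := by
    rw [Complex.dist_eq]
    have : w - ((w.re : ℝ) : ℂ) = (w.im : ℂ) * I := by
      apply Complex.ext <;> simp
    rw [this, norm_mul, Complex.norm_real, Real.norm_eq_abs, Complex.norm_I, mul_one, abs_of_pos hw1]
  have hg_le : (g w).im ≤ Kr * w.im := by
    have h1 : dist (g w) (g ((w.re : ℝ) : ℂ)) ≤ Kr * dist w ((w.re : ℝ) : ℂ) :=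
      hlip.dist_le_mul w hw_in _ hre_in
    rw [hdist_re] at h1
    have h2 : (g w).im - (g ((w.re : ℝ) : ℂ)).im ≤ ‖g w - g ((w.re : ℝ) : ℂ)‖ := by
      calc (g w).im - (g ((w.re : ℝ) : ℂ)).im = (g w - g ((w.re : ℝ) : ℂ)).im := by
            rw [Complex.sub_im]
        _ ≤ |(g w - g ((w.re : ℝ) : ℂ)).im| := le_abs_self _
        _ ≤ ‖_‖ := Complex.abs_im_le_norm _
    rw [hgre, sub_zero] at h2
    rw [Complex.dist_eq] at h1
    linarith
  -- normSq bound
  have hnsq_lt : Complex.normSq (w - x) < δ ^ 2 := by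
    have habs : ‖w - x‖ < δ := by rw [← Complex.dist_eq]; exact hwd
    rw [hnsq]
    nlinarith [norm_nonneg (w - x)]
  have hkey : Complex.normSq (w - x) * (Kr + 1) < r := by
    calc Complex.normSq (w - x) * (Kr + 1) < δ ^ 2 * (Kr + 1) := by
          apply mul_lt_mul_of_pos_right hnsq_lt (by positivity)
      _ ≤ (r / (Kr + 1)) * (Kr + 1) := by
          apply mul_le_mul_of_nonneg_right hδsq (by positivity)
      _ = r := div_mul_cancel₀ r (by positivity)
  -- final contradiction
  have hLpos : 0 < (L w).im := hw2
  rw [him_eq] at hLpos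
  have hc1 : 0 < Complex.normSq (w - x) *
      (-(r * w.im) / Complex.normSq (w - x) + (g w).im) :=
    mul_pos hnsq_pos hLpos
  have hc2 : Complex.normSq (w - x) * (-(r * w.im) / Complex.normSq (w - x) + (g w).im)
      = -(r * w.im) + Complex.normSq (w - x) * (g w).im := by
    field_simp
  rw [hc2] at hc1
  nlinarith [mul_le_mul_of_nonneg_left hg_le hnsq_pos.le, mul_pos hw1 hnsq_pos,
    mul_lt_mul_of_pos_right hkey hw1]

/-- If `L` is meromorphic on ℂ, holomorphic on the upper half-plane `H`, real on ℝ, with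
all poles real, simple and of positive residue, then every connected component of
`Y = {z ∈ H : Im L(z) > 0}` is unbounded. -/
theorem components_of_Y_unbounded (L : ℂ → ℂ)
    (hmer : MeromorphicOn L Set.univ)
    (hhol : ∀ z : ℂ, 0 < z.im → AnalyticAt ℂ L z)
    (hreal : ∀ x : ℝ, AnalyticAt ℂ L (x : ℂ) → (L x).im = 0)
    (hpoles : ∀ z : ℂ, ¬ AnalyticAt ℂ L z →
      z.im = 0 ∧ ∃ r : ℝ, 0 < r ∧ ∃ g : ℂ → ℂ, AnalyticAt ℂ g z ∧
        ∀ᶠ w in nhdsWithin z {z}ᶜ, L w = (r : ℂ) / (w - z) + g w)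
    (Y : Set ℂ) (hY : Y = {z : ℂ | 0 < z.im ∧ 0 < (L z).im}) :
    ∀ z₀ ∈ Y, ¬ Bornology.IsBounded (connectedComponentIn Y z₀) := by
  subst hY
  set Y : Set ℂ := {z : ℂ | 0 < z.im ∧ 0 < (L z).im} with hYdef
  intro z₀ hz₀ hbdd
  set C : Set ℂ := connectedComponentIn Y z₀ with hCdef
  -- Y is open
  have hYopen : IsOpen Y := by
    rw [isOpen_iff_mem_nhds]
    intro z hz
    have h1 : ∀ᶠ w in nhds z, 0 < w.im :=
      (isOpen_lt continuous_const Complex.continuous_im).eventually_mem hz.1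
    have hc : ContinuousAt (fun w => (L w).im) z :=
      Complex.continuous_im.continuousAt.comp (hhol z hz.1).continuousAt
    have h2 : ∀ᶠ w in nhds z, 0 < (L w).im :=
      hc.tendsto.eventually ((isOpen_lt continuous_const continuous_id).eventually_mem hz.2)
    exact (h1.and h2)
  have hCopen : IsOpen C := hYopen.connectedComponentIn
  have hCsub : C ⊆ Y := connectedComponentIn_subset _ _
  have hclY : closure C ⊆ closure Y := closure_mono hCsub
  -- every point of closure Y is an analytic point of L
  have hA : ∀ z ∈ closure Y, AnalyticAt ℂ L z := by
    intro z hz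
    by_contra hna
    exact pole_not_in_closure_Y L hmer hreal hpoles z hna hz
  -- frontier bound: Im L ≤ 0 on frontier C
  have hfront : ∀ z ∈ frontier C, ‖Complex.exp (-(L z * I))‖ ≤ 1 := by
    intro z hz
    have hzcl : z ∈ closure C := frontier_subset_closure hz
    have hzY' : z ∈ closure Y := hclY hzcl
    have han := hA z hzY'
    have him0 : 0 ≤ z.im := by
      have hsub : closure Y ⊆ {w : ℂ | 0 ≤ w.im} :=
        closure_minimal (fun w hw => hw.1.le)
          (isClosed_le continuous_const Complex.continuous_im)
      exact hsub hzY'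
    have hLle : (L z).im ≤ 0 := by
      rcases eq_or_lt_of_le him0 with h0 | hpos
      · -- z is real
        have hzr : z = ((z.re : ℝ) : ℂ) := by
          apply Complex.ext <;> simp [← h0]
        rw [hzr]
        rw [hzr] at han
        exact le_of_eq (hreal z.re han)
      · -- z ∈ H but z ∉ Y
        rw [frontier, hCopen.interior_eq] at hz
        have hzC : z ∉ C := hz.2
        have hzY : z ∉ Y := by
          intro hzy
          apply hzC
          have h1 : connectedComponentIn Y z ∈ nhds z :=
            (hYopen.connectedComponentIn).mem_nhds (mem_connectedComponentIn hzy)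
          obtain ⟨w, hw1, hw2⟩ := mem_closure_iff_nhds.mp hz.1 _ h1
          have e1 : connectedComponentIn Y z = connectedComponentIn Y w :=
            connectedComponentIn_eq hw1
          have e2 : connectedComponentIn Y z₀ = connectedComponentIn Y w :=
            connectedComponentIn_eq hw2
          have : z ∈ connectedComponentIn Y z := mem_connectedComponentIn hzy
          rw [e1, ← e2] at this
          exact this
        by_contra hc
        push_neg at hc
        exact hzY ⟨hpos, hc⟩
    rw [Complex.norm_exp]
    have : (-(L z * I)).re = (L z).im := by simp
    rw [this]
    exact Real.exp_le_one_iff.mpr hLle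
  -- maximum principle
  have hdiff : DiffContOnCl ℂ (fun w => Complex.exp (-(L w * I))) C := by
    constructor
    · intro w hw
      have : AnalyticAt ℂ L w := hhol w (hCsub hw).1
      exact (((this.differentiableAt.mul_const I).neg).cexp).differentiableWithinAt
    · intro w hw
      have : AnalyticAt ℂ L w := hA w (hclY hw)
      exact (((this.continuousAt.mul continuousAt_const).neg).cexp).continuousWithinAt
  have hz₀cl : z₀ ∈ closure C := subset_closure (mem_connectedComponentIn hz₀)
  have hmax := Complex.norm_le_of_forall_mem_frontier_norm_le hbdd hdiff hfront hz₀cl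
  rw [Complex.norm_exp] at hmax
  have : (-(L z₀ * I)).re = (L z₀).im := by simp
  rw [this] at hmax
  have := Real.exp_le_one_iff.mp hmax
  linarith [hz₀.2]
end

section
/- Let φ be an entire function of order at most 1, real on the real axis, and suppose there exist constants C > 0, and for each small δ > 0 a set of radii r of logarithmic density 1, such that |φ(z)| > C/r² for |z| = r in this set and δ ≤ |arg z| ≤ π − δ. If φ has only finitely many zeros, then φ is of the form P(z)e^{az} with P a polynomial and a ∈ ℝ; if additionally φ is transcendental and satisfies the lower bound for all arguments bounded away from the real axis on radii of logarithmic density 1, then φ must have infinitely many zeros. -/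
open Complex MeasureTheory Set Filter

/-- `E ⊆ [1,∞)` has logarithmic density 1. -/
def HasLogDensityOne (E : Set ℝ) : Prop :=
  Tendsto (fun r : ℝ => (∫ t in Icc (1:ℝ) r, E.indicator (fun t => 1 / t) t) / Real.log r)
    atTop (nhds 1)

section Aux

open Metric Real intervalIntegral Polynomial

lemma entire_deriv_differentiable {h : ℂ → ℂ} (hh : Differentiable ℂ h) :
    Differentiable ℂ (deriv h) := fun z =>
  (((hh.differentiableOn.analyticOnNhd isOpen_univ).deriv) z (mem_univ z)).differentiableAt

lemma list_prod_lower (L : List ℂ) (z : ℂ)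
    (h : ∀ w ∈ L, ‖w‖ + 1 ≤ ‖z‖) :
    1 ≤ ‖(L.map (fun w => z - w)).prod‖ := by
  induction L with
  | nil => simp
  | cons w L' IH =>
    rw [List.map_cons, List.prod_cons, norm_mul]
    have h1 : 1 ≤ ‖z - w‖ := by
      have h2 : ‖z‖ ≤ ‖z - w‖ + ‖w‖ := by
        simpa using norm_add_le (z - w) w
      linarith [h w List.mem_cons_self]
    have h3 := IH (fun w' hw' => h w' (List.mem_cons_of_mem _ hw'))
    nlinarith [norm_nonneg ((L'.map (fun w => z - w)).prod)]

lemma eval_real_zero {P : Polynomial ℂ} (h : ∀ x : ℝ, P.eval (x:ℂ) = 0) : P = 0 := by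
  apply Polynomial.eq_zero_of_infinite_isRoot
  apply Set.Infinite.mono (s := Set.range ((↑·) : ℝ → ℂ))
  · rintro z ⟨x, rfl⟩
    exact h x
  · exact Set.infinite_range_of_injective Complex.ofReal_injective

lemma deriv_comb {P : Polynomial ℂ} {c : ℂ} (hc : c ≠ 0)
    (h : Polynomial.derivative P + Polynomial.C c * P = 0) : P = 0 := by
  by_contra hP
  have h1 : (Polynomial.derivative P).coeff P.natDegree = 0 := by
    rw [Polynomial.coeff_derivative]
    rw [Polynomial.coeff_eq_zero_of_natDegree_lt (by omega)]
    ring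
  have h2 : (Polynomial.derivative P + Polynomial.C c * P).coeff P.natDegree = 0 := by
    rw [h]; simp
  rw [Polynomial.coeff_add, h1, zero_add, Polynomial.coeff_C_mul] at h2
  have h3 : P.coeff P.natDegree ≠ 0 := by
    rw [← Polynomial.leadingCoeff]
    exact Polynomial.leadingCoeff_ne_zero.mpr hP
  exact h3 (by simpa [hc] using h2)

lemma poly_exp_step (P Q : Polynomial ℂ) (c : ℂ)
    (h : ∀ x : ℝ, P.eval (x:ℂ) * Complex.exp (c * x) = Q.eval (x:ℂ)) :
    ∀ x : ℝ, (Polynomial.derivative P + Polynomial.C c * P).eval (x:ℂ) * Complex.exp (c * x)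
      = (Polynomial.derivative Q).eval (x:ℂ) := by
  intro x
  have h1 : HasDerivAt (fun z : ℂ => P.eval z * Complex.exp (c * z))
      ((Polynomial.derivative P + Polynomial.C c * P).eval (x:ℂ) * Complex.exp (c * ↑x))
      (x:ℂ) := by
    have hp := Polynomial.hasDerivAt P (x:ℂ)
    have he : HasDerivAt (fun z : ℂ => Complex.exp (c * z))
        (Complex.exp (c * ↑x) * c) (x:ℂ) := by
      have := ((hasDerivAt_id (x:ℂ)).const_mul c).cexp
      simpa using this
    have := hp.mul he
    refine this.congr_deriv ?_
    simp [Polynomial.eval_add, Polynomial.eval_mul]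
    ring
  have hL := h1.comp_ofReal
  have hR := (Polynomial.hasDerivAt Q (x:ℂ)).comp_ofReal
  have hfun : (fun t : ℝ => P.eval (t:ℂ) * Complex.exp (c * t))
      = fun t : ℝ => Q.eval (t:ℂ) := funext h
  rw [hfun] at hL
  exact hL.unique hR

lemma poly_exp_eq_zero {c : ℂ} (hc : c ≠ 0) :
    ∀ (n : ℕ) (P Q : Polynomial ℂ), Q.natDegree ≤ n →
    (∀ x : ℝ, P.eval (x:ℂ) * Complex.exp (c * x) = Q.eval (x:ℂ)) → P = 0 := by
  intro n
  induction n with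
  | zero =>
    intro P Q hdeg h
    have hQ : Polynomial.derivative Q = 0 := by
      rw [Polynomial.eq_C_of_natDegree_le_zero hdeg]
      simp
    have hstep := poly_exp_step P Q c h
    rw [hQ] at hstep
    have hP1 : Polynomial.derivative P + Polynomial.C c * P = 0 := by
      apply eval_real_zero
      intro x
      have := hstep x
      simp only [Polynomial.eval_zero] at this
      exact (mul_eq_zero.mp this).resolve_right (Complex.exp_ne_zero _)
    exact deriv_comb hc hP1
  | succ n IH =>
    intro P Q hdeg h
    have hstep := poly_exp_step P Q c h
    have hdeg' : (Polynomial.derivative Q).natDegree ≤ n := by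
      have := Polynomial.natDegree_derivative_le Q
      omega
    exact deriv_comb hc
      (IH (Polynomial.derivative P + Polynomial.C c * P) (Polynomial.derivative Q) hdeg' hstep)

lemma exists_primitive {h : ℂ → ℂ} (hh : Differentiable ℂ h) :
    ∃ g : ℂ → ℂ, ∀ z, HasDerivAt g (h z) z := by
  have hd : Differentiable ℂ (deriv h) := entire_deriv_differentiable hh
  have hhc : Continuous h := hh.continuous
  have hdc : Continuous (deriv h) := hd.continuous
  refine ⟨fun z => ∫ t in (0:ℝ)..1, z * h (↑t * z), fun z₀ => ?_⟩
  set F : ℂ → ℝ → ℂ := fun z t => z * h (↑t * z) with hF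
  set F' : ℂ → ℝ → ℂ := fun z t => h (↑t * z) + z * (deriv h (↑t * z) * ↑t) with hF'
  obtain ⟨w₀, hw₀mem, hw₀⟩ := (isCompact_closedBall (0:ℂ) (‖z₀‖+1)).exists_isMaxOn
    ⟨0, by simp [mem_closedBall]; positivity⟩
    (((hh.continuous.norm).add ((continuous_const.mul (hd.continuous.norm)))).continuousOn :
      ContinuousOn (fun w => ‖h w‖ + (‖z₀‖+1) * ‖deriv h w‖) _)
  set C : ℝ := ‖h w₀‖ + (‖z₀‖+1) * ‖deriv h w₀‖ with hC
  have key := (intervalIntegral.hasDerivAt_integral_of_dominated_loc_of_deriv_le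
    (F := F) (F' := F') (x₀ := z₀) (a := (0:ℝ)) (b := 1) (bound := fun _ => C) (μ := volume)
    (s := ball z₀ 1) (ball_mem_nhds z₀ one_pos) ?_ ?_ ?_ ?_ ?_ ?_).2
  · have fct : ∫ t in (0:ℝ)..1, F' z₀ t = h z₀ := by
      have : ∀ t ∈ uIcc (0:ℝ) 1, HasDerivAt (fun t : ℝ => (↑t : ℂ) * h (↑t * z₀))
          (F' z₀ t * 1) t := by
        intro t _
        have hin : HasDerivAt (fun w : ℂ => h (w * z₀)) (deriv h (↑t * z₀) * z₀) ↑t := by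
          have := ((hh (↑t * z₀)).hasDerivAt).comp (↑t : ℂ)
            ((hasDerivAt_id (↑t : ℂ)).mul_const z₀)
          exact this.congr_deriv (by ring)
        have hc : HasDerivAt (fun w : ℂ => w * h (w * z₀))
            (1 * h (↑t * z₀) + ↑t * (deriv h (↑t * z₀) * z₀)) ↑t :=
          (hasDerivAt_id _).mul hin
        have := hc.comp_ofReal
        convert this using 1
        simp [hF']; ring
      have hint : IntervalIntegrable (fun t => F' z₀ t * 1) volume 0 1 := by
        apply Continuous.intervalIntegrable
        simp only [hF']
        fun_prop
      have := intervalIntegral.integral_eq_sub_of_hasDerivAt this hint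
      simp only [mul_one] at this ⊢
      rw [this]
      simp
    rw [fct] at key
    exact key
  · filter_upwards with z
    apply Continuous.aestronglyMeasurable
    fun_prop
  · apply Continuous.intervalIntegrable; fun_prop
  · apply Continuous.aestronglyMeasurable; · fun_prop
  · filter_upwards with t
    intro ht z hz
    have ht' : t ∈ Set.Ioc (0:ℝ) 1 := by rwa [Set.uIoc_of_le zero_le_one] at ht
    have hzn : ‖z‖ ≤ ‖z₀‖ + 1 := by
      have := (mem_ball_iff_norm.mp hz).le
      have h2 := norm_sub_norm_le z z₀
      linarith
    have htz : ‖(↑t : ℂ) * z‖ ≤ ‖z₀‖ + 1 := by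
      rw [norm_mul, Complex.norm_real, Real.norm_eq_abs, _root_.abs_of_pos ht'.1]
      nlinarith [norm_nonneg z, ht'.1.le, ht'.2]
    have hmem : (↑t : ℂ) * z ∈ closedBall (0:ℂ) (‖z₀‖+1) := by
      simpa [mem_closedBall, dist_eq_norm] using htz
    have := hw₀ hmem
    simp only [hF']
    calc ‖h (↑t * z) + z * (deriv h (↑t * z) * ↑t)‖
        ≤ ‖h (↑t * z)‖ + ‖z‖ * (‖deriv h (↑t * z)‖ * ‖(↑t:ℂ)‖) := by
          refine (norm_add_le _ _).trans (le_of_eq ?_)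
          rw [norm_mul, norm_mul]
      _ ≤ ‖h (↑t * z)‖ + (‖z₀‖+1) * (‖deriv h (↑t * z)‖ * 1) := by
          have h1 : ‖(↑t:ℂ)‖ ≤ 1 := by
            rw [Complex.norm_real, Real.norm_eq_abs, _root_.abs_of_pos ht'.1]; exact ht'.2
          refine add_le_add le_rfl ?_
          exact mul_le_mul hzn (mul_le_mul_of_nonneg_left h1 (norm_nonneg _))
            (by positivity) (by positivity)
      _ ≤ C := by simpa [mul_one] using this
  · apply Continuous.intervalIntegrable; fun_prop
  · filter_upwards with t
    intro ht z hz
    have hin : HasDerivAt (fun z : ℂ => h (↑t * z)) (deriv h (↑t * z) * ↑t) z := by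
      have := ((hh (↑t * z)).hasDerivAt).comp z ((hasDerivAt_id z).const_mul (↑t : ℂ))
      exact this.congr_deriv (by ring)
    have : HasDerivAt (fun z => F z t)
        (1 * h (↑t * z) + z * (deriv h (↑t * z) * ↑t)) z :=
      (hasDerivAt_id _).mul hin
    simpa [hF', one_mul] using this

lemma exists_log {ψ : ℂ → ℂ} (hψ : Differentiable ℂ ψ) (h0 : ∀ z, ψ z ≠ 0) :
    ∃ G : ℂ → ℂ, Differentiable ℂ G ∧ ∀ z, ψ z = Complex.exp (G z) := by
  have hd : Differentiable ℂ (deriv ψ) := entire_deriv_differentiable hψ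
  have hh : Differentiable ℂ (fun z => deriv ψ z / ψ z) := hd.div hψ h0
  obtain ⟨g, hg⟩ := exists_primitive hh
  have hgd : Differentiable ℂ g := fun z => (hg z).differentiableAt
  refine ⟨fun z => g z - g 0 + Complex.log (ψ 0), (hgd.sub_const _).add_const _, ?_⟩
  set G : ℂ → ℂ := fun z => g z - g 0 + Complex.log (ψ 0) with hGdef
  have hDdiff : Differentiable ℂ (fun z => ψ z * Complex.exp (-G z)) := by
    exact hψ.mul (((hgd.sub_const _).add_const _).neg.cexp)
  have hD : ∀ x, deriv (fun z => ψ z * Complex.exp (-G z)) x = 0 := by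
    intro z
    have hGz : HasDerivAt G (deriv ψ z / ψ z) z := ((hg z).sub_const _).add_const _
    have hexp : HasDerivAt (fun z => Complex.exp (-G z))
        (Complex.exp (-G z) * (-(deriv ψ z / ψ z))) z := hGz.neg.cexp
    have hprod := ((hψ z).hasDerivAt).mul hexp
    have : deriv ψ z * Complex.exp (-G z) +
        ψ z * (Complex.exp (-G z) * (-(deriv ψ z / ψ z))) = 0 := by
      rw [div_eq_mul_inv]
      field_simp [h0 z]
      ring
    rw [this] at hprod
    exact hprod.deriv
  have key : ∀ z, ψ z * Complex.exp (-G z) = ψ 0 * Complex.exp (-G 0) := fun z =>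
    is_const_of_deriv_eq_zero hDdiff hD z 0
  intro z
  have h00 : ψ 0 * Complex.exp (-G 0) = 1 := by
    have : -G 0 = -Complex.log (ψ 0) := by simp [hGdef]
    rw [this, Complex.exp_neg, Complex.exp_log (h0 0)]
    exact mul_inv_cancel₀ (h0 0)
  have hz := key z
  rw [h00, Complex.exp_neg] at hz
  field_simp at hz
  exact hz

lemma coeff_bound {G : ℂ → ℂ} (hG : Differentiable ℂ G) {R : NNReal} (hR : 0 < R)
    {A : ℝ} (hA : 0 ≤ A) (hbound : ∀ z : ℂ, ‖z‖ = (R : ℝ) → (G z).re ≤ A)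
    {k : ℕ} (hk : 1 ≤ k) :
    ‖(cauchyPowerSeries G 0 (R : ℝ)).coeff k‖ * (R : ℝ)^k ≤ 4*A + 2*‖G 0‖ := by
  have hRpos : (0:ℝ) < R := hR
  have hRne : ((R:ℝ) : ℂ) ≠ 0 := by exact_mod_cast hRpos.ne'
  set f : ℝ → ℂ := fun θ => G (circleMap 0 (R:ℝ) θ) with hf
  have hfc : Continuous f := hG.continuous.comp (continuous_circleMap 0 (R:ℝ))
  have hec : ∀ n : ℕ, Continuous (fun θ:ℝ => (Complex.exp (θ*I))⁻¹^n) := fun n =>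
    ((Complex.continuous_exp.comp (by fun_prop)).inv₀ (fun θ => Complex.exp_ne_zero _)).pow _
  set S : ℕ → ℂ := fun k => ∫ θ in (0:ℝ)..2*π, (Complex.exp (θ*I))⁻¹^k * f θ with hS
  have hSA : ∀ k : ℕ, S k = (2*(π:ℝ) : ℂ) * ((R:ℝ):ℂ)^k
      * (cauchyPowerSeries G 0 (R:ℝ)).coeff k := by
    intro k
    have h1 : (cauchyPowerSeries G 0 (R:ℝ)).coeff k
        = (2*(π:ℝ)*I : ℂ)⁻¹ • ∮ z in C(0, (R:ℝ)), ((1:ℂ)/(z-0))^k • (z-0)⁻¹ • G z := by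
      rw [FormalMultilinearSeries.coeff]
      exact cauchyPowerSeries_apply G 0 (R:ℝ) k 1
    have h2 : (∮ z in C(0, (R:ℝ)), ((1:ℂ)/(z-0))^k • (z-0)⁻¹ • G z)
        = I * (((R:ℝ):ℂ)⁻¹^k * S k) := by
      rw [circleIntegral]
      rw [intervalIntegral.integral_congr
        (g := fun θ => I * (((R:ℝ):ℂ)⁻¹^k * ((Complex.exp (θ*I))⁻¹^k * f θ)))]
      · rw [intervalIntegral.integral_const_mul, intervalIntegral.integral_const_mul]
      · intro θ _
        simp only [deriv_circleMap, circleMap_zero, sub_zero, smul_eq_mul, hf]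
        have hne : Complex.exp (θ*I) ≠ 0 := Complex.exp_ne_zero _
        field_simp
        ring
    rw [h1, h2, smul_eq_mul]
    have hπ : ((π:ℝ) : ℂ) ≠ 0 := by exact_mod_cast Real.pi_ne_zero
    field_simp
    rw [mul_assoc, ← mul_pow, mul_one_div_cancel hRne, one_pow, mul_one]
  have hTB : ∀ m : ℕ, (∫ θ in (0:ℝ)..2*π, (Complex.exp (θ*I))^(m+1) * f θ) = 0 := by
    intro m
    have hcirc : (∮ z in C(0, (R:ℝ)), z^m * G z) = 0 := by
      apply Complex.circleIntegral_eq_zero_of_differentiable_on_off_countable hRpos.le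
        countable_empty
      · exact ((continuous_pow m).mul hG.continuous).continuousOn
      · exact fun z _ => ((differentiable_pow m).mul hG).differentiableAt
    rw [circleIntegral] at hcirc
    rw [intervalIntegral.integral_congr
      (g := fun θ => (I * ((R:ℝ):ℂ)^(m+1)) * ((Complex.exp (θ*I))^(m+1) * f θ))] at hcirc
    · rw [intervalIntegral.integral_const_mul] at hcirc
      rcases mul_eq_zero.mp hcirc with h | h
      · exact absurd h (by simp [I_ne_zero, hRne])
      · exact h
    · intro θ _
      simp only [deriv_circleMap, circleMap_zero, smul_eq_mul, hf]
      ring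
  have hconj : ∀ θ : ℝ, (starRingEnd ℂ) (Complex.exp (θ*I)) = (Complex.exp (θ*I))⁻¹ := by
    intro θ
    rw [← Complex.exp_conj, ← Complex.exp_neg]
    congr 1
    simp
  have hTC : ∀ m : ℕ, (∫ θ in (0:ℝ)..2*π,
      (Complex.exp (θ*I))⁻¹^(m+1) * (starRingEnd ℂ) (f θ)) = 0 := by
    intro m
    calc (∫ θ in (0:ℝ)..2*π, (Complex.exp (θ*I))⁻¹^(m+1) * (starRingEnd ℂ) (f θ))
        = ∫ θ in (0:ℝ)..2*π, (starRingEnd ℂ) ((Complex.exp (θ*I))^(m+1) * f θ) := by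
          refine intervalIntegral.integral_congr (fun θ _ => ?_)
          rw [map_mul, map_pow, hconj]
      _ = (starRingEnd ℂ) (∫ θ in (0:ℝ)..2*π, (Complex.exp (θ*I))^(m+1) * f θ) := by
          rw [intervalIntegral.integral_of_le (by positivity),
            intervalIntegral.integral_of_le (by positivity)]
          exact integral_conj
      _ = 0 := by rw [hTB m]; simp
  obtain ⟨m, rfl⟩ : ∃ m, k = m + 1 := ⟨k - 1, (Nat.succ_pred_eq_of_pos hk).symm⟩
  have hint1 : IntervalIntegrable (fun θ => (Complex.exp (θ*I))⁻¹^(m+1) * f θ)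
      volume 0 (2*π) := ((hec (m+1)).mul hfc).intervalIntegrable _ _
  have hint2 : IntervalIntegrable (fun θ => (Complex.exp (θ*I))⁻¹^(m+1)
      * (starRingEnd ℂ) (f θ)) volume 0 (2*π) :=
    ((hec (m+1)).mul (Complex.continuous_conj.comp hfc)).intervalIntegrable _ _
  have hD : S (m+1) = ∫ θ in (0:ℝ)..2*π,
      (Complex.exp (θ*I))⁻¹^(m+1) * (2 * (((f θ).re : ℝ) : ℂ)) := by
    have h0 : S (m+1) = (∫ θ in (0:ℝ)..2*π, (Complex.exp (θ*I))⁻¹^(m+1) * f θ)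
        + ∫ θ in (0:ℝ)..2*π, (Complex.exp (θ*I))⁻¹^(m+1) * (starRingEnd ℂ) (f θ) := by
      rw [hTC m, add_zero]
    rw [h0, ← intervalIntegral.integral_add hint1 hint2]
    refine intervalIntegral.integral_congr (fun θ _ => ?_)
    rw [← mul_add, Complex.add_conj]
    norm_num
  have habs : ∀ θ : ℝ, ‖(Complex.exp (θ*I))⁻¹^(m+1) * (2 * (((f θ).re : ℝ) : ℂ))‖
      = 2 * |(f θ).re| := by
    intro θ
    rw [norm_mul, norm_pow, norm_inv]
    have h1 : ‖Complex.exp (θ*I)‖ = 1 := by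
      simpa using Complex.norm_exp_ofReal_mul_I θ
    rw [h1]
    simp [Complex.norm_real, Real.norm_eq_abs, _root_.abs_of_nonneg]
  have hre_bound : ∀ θ : ℝ, (f θ).re ≤ A := by
    intro θ
    apply hbound
    simp [hf, norm_circleMap_zero, _root_.abs_of_nonneg hRpos.le]
  have hstep1 : ‖S (m+1)‖ ≤ ∫ θ in (0:ℝ)..2*π, 2 * |(f θ).re| := by
    rw [hD]
    refine (intervalIntegral.norm_integral_le_integral_norm (by positivity)).trans_eq ?_
    exact intervalIntegral.integral_congr (fun θ _ => habs θ)
  have hstep2 : (∫ θ in (0:ℝ)..2*π, 2 * |(f θ).re|)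
      ≤ ∫ θ in (0:ℝ)..2*π, (4*A - 2*(f θ).re) := by
    refine intervalIntegral.integral_mono_on (by positivity) ?_ ?_ ?_
    · apply Continuous.intervalIntegrable; fun_prop
    · apply Continuous.intervalIntegrable; fun_prop
    · intro θ _
      have h1 := hre_bound θ
      have h2 : |(f θ).re| ≤ 2*A - (f θ).re := by
        rw [abs_le]; constructor <;> linarith
      linarith
  have hfint : IntervalIntegrable f volume 0 (2*π) := hfc.intervalIntegrable _ _
  have hS0 : (∫ θ in (0:ℝ)..2*π, f θ) = S 0 := by
    rw [hS]
    refine intervalIntegral.integral_congr (fun θ _ => ?_)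
    simp
  have hc0 : (cauchyPowerSeries G 0 (R:ℝ)).coeff 0 = G 0 := by
    have hps := hG.hasFPowerSeriesOnBall 0 (R := R) hR
    rw [FormalMultilinearSeries.coeff]
    exact hps.coeff_zero 1
  have hreint : (∫ θ in (0:ℝ)..2*π, (f θ).re) = 2*π*(G 0).re := by
    have h2 : (∫ θ in (0:ℝ)..2*π, f θ) = 2*(π:ℂ)*(G 0) := by
      rw [hS0, hSA 0, hc0]
      simp
    have h1 := Complex.reCLM.intervalIntegral_comp_comm hfint (a := 0) (b := 2*π)
    rw [h2] at h1
    simpa using h1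
  have hstep3 : (∫ θ in (0:ℝ)..2*π, (4*A - 2*(f θ).re))
      = 8*π*A - 4*π*(G 0).re := by
    rw [intervalIntegral.integral_sub (by apply Continuous.intervalIntegrable; fun_prop)
      (by apply Continuous.intervalIntegrable; fun_prop)]
    rw [intervalIntegral.integral_const, intervalIntegral.integral_const_mul, hreint]
    simp only [smul_eq_mul, sub_zero]
    ring
  have hnorm : ‖S (m+1)‖
      = 2*π*(‖(cauchyPowerSeries G 0 (R:ℝ)).coeff (m+1)‖ * (R:ℝ)^(m+1)) := by
    rw [hSA (m+1), norm_mul, norm_mul]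
    have e1 : ‖(2*(π:ℝ) : ℂ)‖ = 2*π := by
      rw [show (2*(π:ℝ) : ℂ) = ((2*π : ℝ) : ℂ) by push_cast; ring, Complex.norm_real,
        Real.norm_eq_abs, _root_.abs_of_pos (by positivity)]
    have e2 : ‖((R:ℝ):ℂ)^(m+1)‖ = (R:ℝ)^(m+1) := by
      rw [norm_pow, Complex.norm_real, Real.norm_eq_abs, _root_.abs_of_pos hRpos]
    rw [e1, e2]
    ring
  have hre0 : -(G 0).re ≤ ‖G 0‖ := by
    have := Complex.abs_re_le_norm (G 0)
    cases abs_le.mp this with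
    | intro h1 h2 => linarith
  have hfinal : 2*π*(‖(cauchyPowerSeries G 0 (R:ℝ)).coeff (m+1)‖ * (R:ℝ)^(m+1))
      ≤ 2*π*(4*A + 2*‖G 0‖) := by
    rw [← hnorm]
    calc ‖S (m+1)‖ ≤ 8*π*A - 4*π*(G 0).re := by
          refine hstep1.trans (hstep2.trans ?_)
          rw [hstep3]
      _ ≤ 2*π*(4*A + 2*‖G 0‖) := by nlinarith [Real.pi_pos]
  exact le_of_mul_le_mul_left hfinal (by positivity)

lemma entire_affine {G : ℂ → ℂ} (hG : Differentiable ℂ G)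
    (hgrow : ∀ᶠ R : ℝ in atTop, ∀ z : ℂ, ‖z‖ = R → (G z).re ≤ R ^ (5/4 : ℝ)) :
    ∃ c a : ℂ, ∀ z, G z = c + a * z := by
  set p := cauchyPowerSeries G 0 ((1:NNReal) : ℝ) with hp
  have hball : HasFPowerSeriesOnBall G p 0 ⊤ := hG.hasFPowerSeriesOnBall 0 one_pos
  have huniq : ∀ R : NNReal, 0 < R → cauchyPowerSeries G 0 (R : ℝ) = p := by
    intro R hR
    exact (hG.hasFPowerSeriesOnBall 0 hR).hasFPowerSeriesAt.eq_formalMultilinearSeries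
      hball.hasFPowerSeriesAt
  have hzero : ∀ k : ℕ, 2 ≤ k → p.coeff k = 0 := by
    intro k hk
    set K : ℝ := 2*‖G 0‖ with hK
    have hbnd : ∀ᶠ R : ℝ in atTop, ‖p.coeff k‖ ≤ (4 + K) * R ^ (-(3/4) : ℝ) := by
      filter_upwards [hgrow, eventually_ge_atTop 1] with R hRg hR1
      have hRpos : (0:ℝ) < R := lt_of_lt_of_le one_pos hR1
      set R' : NNReal := ⟨R, hRpos.le⟩ with hR'
      have hR'pos : 0 < R' := hRpos
      have hb := coeff_bound hG hR'pos (A := R ^ (5/4 : ℝ))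
        (by positivity) (fun z hz => hRg z hz) (le_trans one_le_two hk)
      rw [huniq R' hR'pos] at hb
      have hcoe : ((R' : ℝ)) = R := rfl
      rw [hcoe] at hb
      have h2k : R^(2:ℕ) ≤ R^k := pow_le_pow_right₀ hR1 hk
      have hnk : ‖p.coeff k‖ * R^(2:ℕ) ≤ 4 * R ^ (5/4:ℝ) + K := by
        refine le_trans ?_ hb
        exact mul_le_mul_of_nonneg_left h2k (norm_nonneg _)
      have hR2 : (0:ℝ) < R^(2:ℕ) := by positivity
      rw [← le_div_iff₀ hR2] at hnk
      refine hnk.trans ?_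
      have e1 : (4 * R ^ (5/4:ℝ) + K) / R^(2:ℕ)
          = 4 * R ^ ((5/4:ℝ) - 2) + K * R ^ (-(2:ℝ)) := by
        rw [← Real.rpow_natCast R 2]
        push_cast
        rw [div_eq_mul_inv, ← Real.rpow_neg hRpos.le]
        rw [add_mul, mul_assoc, ← Real.rpow_add hRpos]
        ring_nf
      rw [e1]
      have h34 : (5/4:ℝ) - 2 = -(3/4:ℝ) := by norm_num
      rw [h34]
      have hKnn : 0 ≤ K := by positivity
      have hle : R ^ (-(2:ℝ)) ≤ R ^ (-(3/4):ℝ) :=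
        Real.rpow_le_rpow_of_exponent_le hR1 (by norm_num)
      have hnn : (0:ℝ) ≤ R ^ (-(3/4):ℝ) := Real.rpow_nonneg hRpos.le _
      nlinarith [Real.rpow_nonneg hRpos.le (-(2:ℝ))]
    have hto : Tendsto (fun R : ℝ => (4 + K) * R ^ (-(3/4) : ℝ)) atTop (nhds 0) := by
      have := tendsto_rpow_neg_atTop (y := (3/4:ℝ)) (by norm_num)
      simpa using this.const_mul (4 + K)
    have hle : ‖p.coeff k‖ ≤ 0 := ge_of_tendsto hto hbnd
    simpa using le_antisymm hle (norm_nonneg _)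
  refine ⟨p.coeff 0, p.coeff 1, fun z => ?_⟩
  have hsum : HasSum (fun n : ℕ => z ^ n • p.coeff n) (G z) := by
    have := hball.hasSum (y := z) (by simp)
    simpa [FormalMultilinearSeries.apply_eq_pow_smul_coeff] using this
  have hsum2 : HasSum (fun n : ℕ => z ^ n • p.coeff n)
      (∑ n ∈ Finset.range 2, z ^ n • p.coeff n) := by
    apply hasSum_sum_of_ne_finset_zero
    intro b hb
    have : 2 ≤ b := by simp [Finset.mem_range, not_lt] at hb; omega
    rw [hzero b this, smul_zero]
  have := hsum.unique hsum2
  rw [this]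
  simp [Finset.sum_range_succ, smul_eq_mul]
  ring

lemma factor_zeros : ∀ (n : ℕ) (φ : ℂ → ℂ), Differentiable ℂ φ →
    ∀ (hS : Set.Finite {z : ℂ | φ z = 0}), hS.toFinset.card ≤ n →
    ∃ (L : List ℂ) (ψ : ℂ → ℂ), Differentiable ℂ ψ ∧ (∀ z, ψ z ≠ 0) ∧
      ∀ z, φ z = ((L.map (fun w => z - w)).prod) * ψ z := by
  intro n
  induction n with
  | zero =>
    intro φ hent hS hcard
    refine ⟨[], φ, hent, fun z hz => ?_, fun z => by simp⟩
    have : hS.toFinset = ∅ := Finset.card_eq_zero.mp (Nat.le_zero.mp hcard)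
    have hz' : z ∈ hS.toFinset := hS.mem_toFinset.mpr hz
    simp [this] at hz'
  | succ n IH =>
    intro φ hent hS hcard
    by_cases hempty : {z : ℂ | φ z = 0} = ∅
    · refine ⟨[], φ, hent, fun z hz => ?_, fun z => by simp⟩
      rw [eq_empty_iff_forall_notMem] at hempty
      exact hempty z hz
    · obtain ⟨z₀, hz₀⟩ := nonempty_iff_ne_empty.mpr hempty
      have hφz₀ : φ z₀ = 0 := hz₀
      have han : AnalyticAt ℂ φ z₀ := hent.analyticAt z₀
      have hne_top : analyticOrderAt φ z₀ ≠ ⊤ := by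
        intro htop
        rw [analyticOrderAt_eq_top] at htop
        have hfin' : ({z : ℂ | φ z = 0} \ {z₀}).Finite := hS.subset diff_subset
        have hopen : ({z : ℂ | φ z = 0} \ {z₀})ᶜ ∈ nhds z₀ :=
          hfin'.isClosed.isOpen_compl.mem_nhds (by simp)
        have hco : ∀ᶠ z in nhds z₀, z ∈ ({z : ℂ | φ z = 0} \ {z₀})ᶜ := hopen
        have hcomb : ∀ᶠ z in nhdsWithin z₀ {z₀}ᶜ,
            φ z = 0 ∧ z ∈ ({z : ℂ | φ z = 0} \ {z₀})ᶜ ∧ z ≠ z₀ :=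
          (((htop.and hco).filter_mono nhdsWithin_le_nhds).and
            eventually_mem_nhdsWithin).mono (by tauto)
        obtain ⟨z, hz1, hz2, hz3⟩ := hcomb.exists
        exact hz2 ⟨hz1, hz3⟩
      obtain ⟨m, hm⟩ := WithTop.ne_top_iff_exists.mp hne_top
      obtain ⟨g, hga, hgz₀, hgev⟩ := han.analyticOrderAt_eq_natCast.mp hm.symm
      have hm1 : 1 ≤ m := by
        rcases Nat.eq_zero_or_pos m with h0 | h1
        · exfalso
          have := hgev.self_of_nhds
          rw [h0] at this
          simp at this
          rw [hφz₀] at this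
          exact hgz₀ this.symm
        · exact h1
      set ψ₁ : ℂ → ℂ := fun z => if z = z₀ then g z₀ else φ z / (z - z₀)^m with hψ₁
      have heq : ψ₁ =ᶠ[nhds z₀] g := by
        filter_upwards [hgev] with z hz
        by_cases h : z = z₀
        · subst h; simp [hψ₁]
        · have hzz : (z - z₀) ≠ 0 := sub_ne_zero.mpr h
          simp only [hψ₁, if_neg h, hz, smul_eq_mul]
          field_simp
      have hglobal : ∀ z, φ z = (z - z₀)^m * ψ₁ z := by
        intro z
        by_cases h : z = z₀
        · subst h
          rw [hφz₀, sub_self, zero_pow (by omega), zero_mul]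
        · have hzz : (z - z₀) ≠ 0 := sub_ne_zero.mpr h
          simp only [hψ₁, if_neg h]
          field_simp
      have hψ₁d : Differentiable ℂ ψ₁ := by
        intro z
        by_cases h : z = z₀
        · subst h
          exact hga.differentiableAt.congr_of_eventuallyEq heq
        · have hev : ψ₁ =ᶠ[nhds z] fun w => φ w / (w - z₀)^m := by
            filter_upwards [isOpen_compl_singleton.mem_nhds (by simpa using h)] with w hw
            simp only [hψ₁, if_neg (by simpa using hw)]
          refine DifferentiableAt.congr_of_eventuallyEq ?_ hev
          exact (hent z).div ((differentiable_id.sub_const z₀).pow m).differentiableAt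
            (pow_ne_zero _ (sub_ne_zero.mpr h))
      have hψ₁z₀ : ψ₁ z₀ ≠ 0 := by simp only [hψ₁, if_pos rfl]; exact hgz₀
      have hzeroiff : ∀ z, z ≠ z₀ → (ψ₁ z = 0 ↔ φ z = 0) := by
        intro z h
        have hzz : ((z - z₀))^m ≠ 0 := pow_ne_zero _ (sub_ne_zero.mpr h)
        simp only [hψ₁, if_neg h, _root_.div_eq_zero_iff]
        tauto
      have hSnew : {z : ℂ | ψ₁ z = 0} = {z : ℂ | φ z = 0} \ {z₀} := by
        ext z
        by_cases h : z = z₀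
        · subst h; simp [hψ₁z₀]
        · simp [hzeroiff z h, h]
      have hS' : Set.Finite {z : ℂ | ψ₁ z = 0} := by
        rw [hSnew]; exact hS.subset diff_subset
      have hcard' : hS'.toFinset.card ≤ n := by
        have he : hS'.toFinset = hS.toFinset.erase z₀ := by
          ext z
          simp [hS'.mem_toFinset, hS.mem_toFinset, hSnew, and_comm]
        rw [he, Finset.card_erase_of_mem (hS.mem_toFinset.mpr hz₀)]
        omega
      obtain ⟨L', ψ, hψd, hψne, hfac⟩ := IH ψ₁ hψ₁d hS' hcard'
      refine ⟨List.replicate m z₀ ++ L', ψ, hψd, hψne, fun z => ?_⟩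
      rw [hglobal z, hfac z]
      rw [List.map_append, List.prod_append, List.map_replicate, List.prod_replicate]
      ring

end Aux

set_option maxHeartbeats 1000000 in
/-- Lemma 6: let `φ` be entire, real on ℝ, of order at most 1, bounded below by `C/r²`
off small sectors around ℝ for radii in a set of logarithmic density 1. If `φ` has
finitely many zeros then `φ(z) = P(z)e^{az}` with `P` a polynomial and `a` real; and if
`φ` is transcendental then `φ` has infinitely many zeros. -/
theorem infinitely_many_zeros (φ : ℂ → ℂ)
    (hent : Differentiable ℂ φ)
    (hreal : ∀ z, φ (starRingEnd ℂ z) = starRingEnd ℂ (φ z))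
    (horder : ∀ ε : ℝ, 0 < ε → ∀ᶠ r : ℝ in atTop,
      ∀ z : ℂ, ‖z‖ = r → ‖φ z‖ ≤ Real.exp (r ^ (1 + ε)))
    (hlow : ∃ C : ℝ, 0 < C ∧ ∀ δ : ℝ, 0 < δ → δ < Real.pi / 2 →
      ∃ E : Set ℝ, E ⊆ Ici 1 ∧ HasLogDensityOne E ∧
        ∀ r ∈ E, ∀ z : ℂ, ‖z‖ = r →
          δ ≤ |Complex.arg z| → |Complex.arg z| ≤ Real.pi - δ →
          C / r ^ 2 < ‖φ z‖) :
    ({z : ℂ | φ z = 0}.Finite →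
      ∃ (P : Polynomial ℂ) (a : ℝ), ∀ z, φ z = P.eval z * Complex.exp ((a : ℂ) * z)) ∧
    ((¬ ∃ p : Polynomial ℂ, ∀ z, φ z = p.eval z) → {z : ℂ | φ z = 0}.Infinite) := by
  have part1 : {z : ℂ | φ z = 0}.Finite →
      ∃ (P : Polynomial ℂ) (a : ℝ), ∀ z, φ z = P.eval z * Complex.exp ((a : ℂ) * z) := by
    intro hfin
    obtain ⟨L, ψ, hψd, hψne, hfac⟩ := factor_zeros hfin.toFinset.card φ hent hfin le_rfl
    obtain ⟨G, hGd, hGeq⟩ := exists_log hψd hψne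
    set M : ℝ := (L.map (fun w : ℂ => ‖w‖)).sum with hM
    have hMw : ∀ w ∈ L, ‖w‖ ≤ M := by
      intro w hw
      exact List.single_le_sum (l := L.map (fun w : ℂ => ‖w‖))
        (fun x hx => by
          obtain ⟨y, _, rfl⟩ := List.mem_map.mp hx
          exact norm_nonneg y) _ (List.mem_map_of_mem hw)
    have hgrow : ∀ᶠ R : ℝ in atTop, ∀ z : ℂ, ‖z‖ = R →
        (G z).re ≤ R ^ (5/4 : ℝ) := by
      have h54 : (1 + (1/4:ℝ)) = 5/4 := by norm_num
      have horder' := horder (1/4) (by norm_num)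
      rw [h54] at horder'
      filter_upwards [horder', eventually_ge_atTop (M+1)] with R hbnd hRM z hz
      have h1 : 1 ≤ ‖(L.map (fun w => z - w)).prod‖ :=
        list_prod_lower L z (fun w hw => by
          have := hMw w hw; rw [hz]; linarith)
      have h2 : ‖φ z‖
          = ‖(L.map (fun w => z - w)).prod‖ * ‖ψ z‖ := by
        rw [hfac z, norm_mul]
      have h4 := hbnd z hz
      rw [h2] at h4
      have h3 : ‖ψ z‖ ≤ Real.exp (R ^ (5/4:ℝ)) := by
        nlinarith [norm_nonneg (ψ z), Real.exp_pos (R^(5/4:ℝ))]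
      have h5 : Real.exp ((G z).re) = ‖ψ z‖ := by
        rw [hGeq z, Complex.norm_exp]
      exact Real.exp_le_exp.mp (by rw [h5]; exact h3)
    obtain ⟨c, a, hca⟩ := entire_affine hGd hgrow
    set P₀ : Polynomial ℂ := Polynomial.C (Complex.exp c)
      * (L.map (fun w => Polynomial.X - Polynomial.C w)).prod with hP₀def
    have hP₀eval : ∀ z, P₀.eval z = Complex.exp c * (L.map (fun w => z - w)).prod := by
      intro z
      rw [hP₀def, Polynomial.eval_mul, Polynomial.eval_C, Polynomial.eval_list_prod,
        List.map_map]
      exact congrArg _ (congrArg List.prod (List.map_congr_left (fun w _ => by simp)))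
    have hφ : ∀ z, φ z = P₀.eval z * Complex.exp (a * z) := by
      intro z
      rw [hfac z, hGeq z, hca z, hP₀eval z, Complex.exp_add]
      ring
    by_cases hP0 : P₀ = 0
    · refine ⟨0, 0, fun z => ?_⟩
      rw [hφ z, hP0]; simp
    · by_cases him : a.im = 0
      · refine ⟨P₀, a.re, fun z => ?_⟩
        rw [hφ z]
        have : ((a.re : ℝ) : ℂ) = a := Complex.ext rfl (by simp [him])
        rw [this]
      · exfalso
        set Q := P₀.map (starRingEnd ℂ) with hQ
        have hident : ∀ x : ℝ,
            P₀.eval (x:ℂ) * Complex.exp ((((2*a.im : ℝ)):ℂ) * I * x) = Q.eval (x:ℂ) := by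
          intro x
          have h1 := hreal (x:ℂ)
          rw [Complex.conj_ofReal, hφ (x:ℂ)] at h1
          have h2 : (starRingEnd ℂ) (P₀.eval (x:ℂ)) = Q.eval (x:ℂ) := by
            rw [hQ, Polynomial.eval_map, ← Complex.conj_ofReal x,
              Polynomial.eval₂_at_apply, Complex.conj_ofReal]
          have h3 : (starRingEnd ℂ) (Complex.exp ((a:ℂ) * x))
              = Complex.exp ((starRingEnd ℂ a) * x) := by
            rw [← Complex.exp_conj, map_mul, Complex.conj_ofReal]
          rw [map_mul, h2, h3] at h1
          have hsub : ((((2*a.im : ℝ)):ℂ) * I) = a - starRingEnd ℂ a :=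
            (Complex.sub_conj a).symm
          have hexp_ne := Complex.exp_ne_zero ((starRingEnd ℂ a) * (x:ℂ))
          calc P₀.eval (x:ℂ) * Complex.exp ((((2*a.im : ℝ)):ℂ) * I * x)
              = (P₀.eval (x:ℂ) * Complex.exp ((a:ℂ) * x))
                / Complex.exp ((starRingEnd ℂ a) * x) := by
                rw [hsub, sub_mul, Complex.exp_sub]; ring
            _ = Q.eval (x:ℂ) := by rw [h1]; field_simp
        have hc' : ((((2*a.im : ℝ)):ℂ) * I) ≠ 0 := by
          apply mul_ne_zero _ Complex.I_ne_zero
          rw [Complex.ofReal_ne_zero]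
          intro h
          exact him (by linarith)
        exact hP0 (poly_exp_eq_zero hc' Q.natDegree P₀ Q le_rfl hident)
  refine ⟨part1, ?_⟩
  intro htrans
  by_contra hc
  rw [Set.not_infinite] at hc
  obtain ⟨P, a, hPa⟩ := part1 hc
  by_cases ha : a = 0
  · exact htrans ⟨P, fun z => by rw [hPa z, ha]; simp⟩
  obtain ⟨C, hC, hlow'⟩ := hlow
  have hpi := Real.pi_pos
  obtain ⟨E, hEsub, hEdens, hElow⟩ := hlow' (Real.pi/4) (by linarith) (by linarith)
  -- E is unbounded
  have hunb : ∀ M : ℝ, ∃ r ∈ E, M < r := by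
    intro M
    by_contra hcon
    push_neg at hcon
    set f : ℝ → ℝ := E.indicator (fun t => 1 / t) with hfdef
    set M' : ℝ := max M 1 with hM'
    have hint : ∀ r : ℝ, M' ≤ r →
        (∫ t in Icc (1:ℝ) r, f t) = ∫ t in Icc (1:ℝ) M', f t := by
      intro r hr
      rw [← MeasureTheory.integral_indicator measurableSet_Icc,
        ← MeasureTheory.integral_indicator measurableSet_Icc]
      congr 1
      funext t
      by_cases h1 : t ∈ Icc (1:ℝ) M'
      · have h1' : t ∈ Icc (1:ℝ) r := ⟨h1.1, h1.2.trans hr⟩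
        rw [Set.indicator_of_mem h1, Set.indicator_of_mem h1']
      · rw [Set.indicator_of_notMem h1]
        by_cases h2 : t ∈ Icc (1:ℝ) r
        · rw [Set.indicator_of_mem h2]
          have hM't : M' < t := by
            rw [mem_Icc, not_and_or] at h1
            rcases h1 with h | h
            · exact absurd h2.1 h
            · exact lt_of_not_ge h
          have hnotE : t ∉ E := fun hmem =>
            absurd (hcon t hmem) (not_le.mpr (lt_of_le_of_lt (le_max_left M 1) hM't))
          show E.indicator (fun t => 1 / t) t = 0
          exact Set.indicator_of_notMem hnotE _
        · rw [Set.indicator_of_notMem h2]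
    have h0 : Tendsto (fun r : ℝ => (∫ t in Icc (1:ℝ) r, f t) / Real.log r)
        atTop (nhds 0) := by
      have hev : (fun r : ℝ => (∫ t in Icc (1:ℝ) r, f t) / Real.log r)
          =ᶠ[atTop] (fun r => (∫ t in Icc (1:ℝ) M', f t) / Real.log r) := by
        filter_upwards [eventually_ge_atTop M'] with r hr
        rw [hint r hr]
      rw [Filter.tendsto_congr' hev]
      exact Tendsto.div_atTop tendsto_const_nhds Real.tendsto_log_atTop
    have := tendsto_nhds_unique hEdens h0
    norm_num at this
  -- key contradiction machine
  set d : ℕ := P.natDegree with hd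
  set K : ℝ := ∑ i ∈ Finset.range (d+1), ‖P.coeff i‖ with hK
  have hK0 : 0 ≤ K := Finset.sum_nonneg (fun i _ => norm_nonneg _)
  have hKP : ∀ z : ℂ, 1 ≤ ‖z‖ →
      ‖P.eval z‖ ≤ (K+1) * (‖z‖)^d := by
    intro z hz
    rw [Polynomial.eval_eq_sum_range]
    calc ‖∑ i ∈ Finset.range (d+1), P.coeff i * z ^ i‖
        ≤ ∑ i ∈ Finset.range (d+1), ‖P.coeff i * z ^ i‖ := by
          simpa using norm_sum_le (Finset.range (d+1)) (fun i => P.coeff i * z^i)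
      _ ≤ ∑ i ∈ Finset.range (d+1), ‖P.coeff i‖ * (‖z‖)^d := by
          apply Finset.sum_le_sum
          intro i hi
          rw [norm_mul, norm_pow]
          have : (‖z‖)^i ≤ (‖z‖)^d :=
            pow_le_pow_right₀ hz (by
              have := Finset.mem_range.mp hi; omega)
          exact mul_le_mul_of_nonneg_left this (norm_nonneg _)
      _ = K * (‖z‖)^d := by rw [← Finset.sum_mul]
      _ ≤ (K+1) * (‖z‖)^d := by
          apply mul_le_mul_of_nonneg_right (by linarith) (by positivity)
  have key : ∀ θ₀ : ℝ, -Real.pi < θ₀ → θ₀ ≤ Real.pi → Real.pi/4 ≤ |θ₀| →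
      |θ₀| ≤ Real.pi - Real.pi/4 → 0 < -(a * Real.cos θ₀) → False := by
    intro θ₀ hI1 hI2 hb1 hb2 hcosneg
    set c₀ : ℝ := -(a * Real.cos θ₀) with hc₀
    have htend := tendsto_rpow_mul_exp_neg_mul_atTop_nhds_zero ((d+2 : ℕ):ℝ) c₀ hcosneg
    have hev : ∀ᶠ x : ℝ in atTop, x ^ (((d+2:ℕ)):ℝ) * Real.exp (-c₀*x) < C/(K+1) :=
      htend.eventually_lt_const (by positivity)
    rw [eventually_atTop] at hev
    obtain ⟨M₀, hM₀⟩ := hev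
    obtain ⟨r, hrE, hrM⟩ := hunb (max M₀ 1)
    have hr1 : (1:ℝ) ≤ r := le_trans (le_max_right _ _) hrM.le
    have hr0 : (0:ℝ) < r := lt_of_lt_of_le one_pos hr1
    set z : ℂ := (r:ℂ) * Complex.exp ((θ₀:ℝ) * I) with hzdef
    have habsz : ‖z‖ = r := by
      rw [hzdef, norm_mul, Complex.norm_real, Real.norm_eq_abs, Complex.norm_exp_ofReal_mul_I,
        mul_one, _root_.abs_of_pos hr0]
    have harg : Complex.arg z = θ₀ := by
      rw [hzdef, Complex.exp_mul_I, Complex.arg_real_mul _ hr0]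
      exact Complex.arg_cos_add_sin_mul_I ⟨hI1, hI2⟩
    have hlb := hElow r hrE z habsz (by rw [harg]; exact hb1) (by rw [harg]; exact hb2)
    have hre : ((a:ℂ) * z).re = a * r * Real.cos θ₀ := by
      have hz2 : (a:ℂ) * z = ((a*r*Real.cos θ₀ : ℝ):ℂ) + ((a*r*Real.sin θ₀ : ℝ):ℂ)*I := by
        rw [hzdef, Complex.exp_mul_I, ← Complex.ofReal_cos, ← Complex.ofReal_sin]
        push_cast; ring
      rw [hz2, Complex.add_re, Complex.ofReal_re, Complex.mul_re, Complex.ofReal_re,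
        Complex.ofReal_im, Complex.I_re, Complex.I_im]
      ring
    have hchain : ‖φ z‖ ≤ (K+1) * r^d * Real.exp (-(c₀ * r)) := by
      rw [hPa z, norm_mul, Complex.norm_exp, hre]
      have hval : a * r * Real.cos θ₀ = -(c₀ * r) := by rw [hc₀]; ring
      rw [hval]
      have hKz := hKP z (by rw [habsz]; exact hr1)
      rw [habsz] at hKz
      exact mul_le_mul_of_nonneg_right hKz (Real.exp_pos _).le
    have hsmall := hM₀ r ((le_max_left _ _).trans hrM.le)
    rw [Real.rpow_natCast] at hsmall
    have hfin2 : (K+1) * r^d * Real.exp (-(c₀*r)) < C / r^2 := by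
      rw [lt_div_iff₀ (by positivity)]
      calc (K+1) * r^d * Real.exp (-(c₀*r)) * r^2
          = (K+1) * (r^(d+2) * Real.exp (-c₀*r)) := by rw [pow_add]; ring_nf
        _ < (K+1) * (C/(K+1)) := by
            exact mul_lt_mul_of_pos_left (hsmall) (by positivity)
        _ = C := by field_simp
    have : C / r^2 < C / r^2 := lt_of_lt_of_le (hlb.trans_le hchain) hfin2.le
    exact lt_irrefl _ this
  rcases lt_or_gt_of_ne ha with haneg | hapos
  · -- a < 0 : take θ₀ = π/4
    apply key (Real.pi/4) (by linarith) (by linarith)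
      (by rw [_root_.abs_of_pos (by linarith)])
      (by rw [_root_.abs_of_pos (by linarith)]; linarith)
    have : Real.cos (Real.pi/4) = Real.sqrt 2 / 2 := Real.cos_pi_div_four
    rw [this]
    have h2 : 0 < Real.sqrt 2 := Real.sqrt_pos.mpr (by norm_num)
    nlinarith
  · -- a > 0 : take θ₀ = 3π/4
    apply key (3*Real.pi/4) (by linarith) (by linarith)
      (by rw [_root_.abs_of_pos (by linarith)]; linarith)
      (by rw [_root_.abs_of_pos (by linarith)]; linarith)
    have h34 : Real.cos (3*Real.pi/4) = -(Real.sqrt 2/2) := by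
      have : (3*Real.pi/4 : ℝ) = Real.pi - Real.pi/4 := by ring
      rw [this, Real.cos_pi_sub, Real.cos_pi_div_four]
    rw [h34]
    have h2 : 0 < Real.sqrt 2 := Real.sqrt_pos.mpr (by norm_num)
    nlinarith
end

section
/- For Q meromorphic in the closed upper half-plane and R ≥ 1: ∫_R^∞ m_{0π}(r, Q)/r³ dr ≤ ∫_R^∞ 𝔪(r, Q)/r² dr, where m_{0π}(r,Q) = (1/2π)∫₀^π log⁺|Q(re^{iθ})| dθ and 𝔪(r,Q) = (1/2π)∫_{arcsin 1/r}^{π−arcsin 1/r} log⁺|Q(r sinθ e^{iθ})|/(r sin²θ) dθ. -/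
open Complex Filter MeasureTheory Set

/-- Positive part of the logarithm: `log⁺ x = max (log x) 0`. -/
noncomputable def logplus (x : ℝ) : ℝ := max (Real.log x) 0

/-- Ordinary half-circle proximity function
`m_{0π}(r, Q) = (1/2π) ∫₀^π log⁺|Q(re^{iθ})| dθ`. -/
noncomputable def mHalfCircle (Q : ℂ → ℂ) (r : ℝ) : ℝ :=
  (1 / (2 * Real.pi)) *
    ∫ θ in (0:ℝ)..Real.pi, logplus (Norm.norm (Q ((r : ℂ) * Complex.exp (θ * Complex.I))))

/-- Tsuji proximity function `𝔪(r, Q)`. -/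
noncomputable def tsujiSmallM (Q : ℂ → ℂ) (r : ℝ) : ℝ :=
  (1 / (2 * Real.pi)) *
    ∫ θ in (Real.arcsin (1/r))..(Real.pi - Real.arcsin (1/r)),
      logplus (Norm.norm (Q (((r * Real.sin θ : ℝ) : ℂ) * Complex.exp (θ * Complex.I)))) /
        (r * Real.sin θ ^ 2)

open Topology
open scoped ENNReal

set_option maxHeartbeats 1000000



lemma logplus_nonneg (x : ℝ) : 0 ≤ logplus x := le_max_right _ _

lemma logplus_eq_log_max (x : ℝ) : logplus x = Real.log (max |x| 1) := by
  rcases le_or_gt (|x|) 1 with h | h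
  · rw [max_eq_right h, Real.log_one, logplus, max_eq_right]
    rw [← Real.log_abs]
    exact Real.log_nonpos (abs_nonneg x) h
  · rw [max_eq_left h.le, logplus, ← Real.log_abs,
      max_eq_left (Real.log_nonneg h.le)]

lemma continuous_logplus : Continuous logplus := by
  have : logplus = fun x => Real.log (max |x| 1) := funext logplus_eq_log_max
  rw [this]
  exact Real.continuousOn_log.comp_continuous
    ((continuous_abs.max continuous_const))
    (fun x => mem_compl_singleton_iff.mpr (by positivity))

lemma logplus_mono {x y : ℝ} (hx : 0 ≤ x) (h : x ≤ y) : logplus x ≤ logplus y := by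
  rw [logplus_eq_log_max, logplus_eq_log_max]
  refine Real.log_le_log (by positivity) (max_le_max ?_ le_rfl)
  rw [_root_.abs_of_nonneg hx, _root_.abs_of_nonneg (hx.trans h)]; exact h

lemma logplus_mul_le {x y : ℝ} (hx : 0 ≤ x) (hy : 0 ≤ y) :
    logplus (x * y) ≤ logplus x + logplus y := by
  rw [logplus_eq_log_max, logplus_eq_log_max, logplus_eq_log_max,
    ← Real.log_mul (by positivity) (by positivity)]
  refine Real.log_le_log (by positivity) (max_le ?_ ?_)
  · rw [abs_mul]
    exact mul_le_mul (le_max_left _ _) (le_max_left _ _) (abs_nonneg _)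
      (le_trans zero_le_one (le_max_right _ _))
  · nlinarith [le_max_right (|x|) 1, le_max_right (|y|) 1]

lemma logplus_pow_le (x : ℝ) (hx : 0 ≤ x) (n : ℕ) : logplus (x ^ n) ≤ n * logplus x := by
  induction n with
  | zero => simp [logplus]
  | succ n ih =>
    rw [pow_succ]
    calc logplus (x ^ n * x) ≤ logplus (x ^ n) + logplus x := logplus_mul_le (by positivity) hx
    _ ≤ n * logplus x + logplus x := by linarith
    _ = (↑(n+1) : ℝ) * logplus x := by push_cast; ring

lemma logplus_le_abs_log (x : ℝ) : logplus x ≤ |Real.log x| :=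
  max_le (le_abs_self _) (abs_nonneg _)

lemma lintegral_Ioi_scale {s b : ℝ} (hs : 0 < s) (h : ℝ → ℝ≥0∞) :
    ∫⁻ t in Ioi (s * b), h t = ENNReal.ofReal s * ∫⁻ r in Ioi b, h (s * r) := by
  have hemb : MeasurableEmbedding (fun r : ℝ => s * r) :=
    (Homeomorph.mulLeft₀ s hs.ne').measurableEmbedding
  have hpre : (fun r : ℝ => s * r) ⁻¹' Ioi (s * b) = Ioi b := by
    ext r; simp [mul_lt_mul_iff_right₀ hs]
  have h1 : ∫⁻ r in Ioi b, h (s * r) =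
      ∫⁻ t, h t ∂(Measure.map (fun r : ℝ => s * r) (volume.restrict (Ioi b))) :=
    (hemb.lintegral_map h).symm
  have h2 : Measure.map (fun r : ℝ => s * r) (volume.restrict (Ioi b))
      = (ENNReal.ofReal s⁻¹) • (volume.restrict (Ioi (s * b))) := by
    rw [← hpre, ← Measure.restrict_map hemb.measurable measurableSet_Ioi,
      Real.map_volume_mul_left hs.ne', abs_of_pos (by positivity),
      Measure.restrict_smul]
  rw [h1, h2, lintegral_smul_measure, smul_eq_mul, ← mul_assoc, ← ENNReal.ofReal_mul hs.le,
    mul_inv_cancel₀ hs.ne', ENNReal.ofReal_one, one_mul]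

lemma ofReal_setIntegral_le {f : ℝ → ℝ} {s : Set ℝ} (hf : ∀ x, 0 ≤ f x) :
    ENNReal.ofReal (∫ x in s, f x) ≤ ∫⁻ x in s, ENNReal.ofReal (f x) := by
  by_cases hi : IntegrableOn f s
  · rw [ofReal_integral_eq_lintegral_ofReal hi (Eventually.of_forall hf)]
  · rw [integral_undef hi]; simp


lemma sin_as_exp (x : ℝ) : ((Real.sin x : ℝ) : ℂ) =
    (Complex.exp (-(x:ℂ) * I) - Complex.exp ((x:ℂ) * I)) * I / 2 := by
  rw [Complex.ofReal_sin]; rfl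

lemma im_mul_exp (t θ : ℝ) : ((t:ℂ) * Complex.exp ((θ:ℂ) * I)).im = t * Real.sin θ := by
  simp [Complex.exp_mul_I, Complex.add_im, Complex.mul_im]
  exact Or.inl (Complex.sin_ofReal_re θ)

lemma gamma_sub (r θ₁ θ₂ : ℝ) :
    ((r * Real.sin θ₁ : ℝ) : ℂ) * Complex.exp ((θ₁:ℂ) * I)
      - ((r * Real.sin θ₂ : ℝ) : ℂ) * Complex.exp ((θ₂:ℂ) * I)
    = (r : ℂ) * Complex.exp (((θ₁ + θ₂ : ℝ) : ℂ) * I) * ((Real.sin (θ₁ - θ₂) : ℝ) : ℂ) := by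
  have hA : Complex.exp ((θ₁:ℂ) * I) * Complex.exp (-(θ₁:ℂ) * I) = 1 := by
    rw [← Complex.exp_add]; ring_nf; exact Complex.exp_zero
  have hB : Complex.exp ((θ₂:ℂ) * I) * Complex.exp (-(θ₂:ℂ) * I) = 1 := by
    rw [← Complex.exp_add]; ring_nf; exact Complex.exp_zero
  have e1 : Complex.exp (((θ₁ + θ₂ : ℝ) : ℂ) * I)
      = Complex.exp ((θ₁:ℂ) * I) * Complex.exp ((θ₂:ℂ) * I) := by
    rw [← Complex.exp_add]; push_cast; ring_nf
  have e2 : Complex.exp (-((θ₁ - θ₂ : ℝ) : ℂ) * I)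
      = Complex.exp (-(θ₁:ℂ) * I) * Complex.exp ((θ₂:ℂ) * I) := by
    rw [← Complex.exp_add]; push_cast; ring_nf
  have e3 : Complex.exp (((θ₁ - θ₂ : ℝ) : ℂ) * I)
      = Complex.exp ((θ₁:ℂ) * I) * Complex.exp (-(θ₂:ℂ) * I) := by
    rw [← Complex.exp_add]; push_cast; ring_nf
  rw [Complex.ofReal_mul, Complex.ofReal_mul, sin_as_exp, sin_as_exp, sin_as_exp,
    e1, e2, e3]
  push_cast
  linear_combination ((r:ℂ) * I / 2 * (1 - Complex.exp ((θ₂:ℂ) * I)^2)) * hA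
    - ((r:ℂ) * I / 2 * (1 - Complex.exp ((θ₁:ℂ) * I)^2)) * hB

lemma gamma_dist {r : ℝ} (hr : 0 ≤ r) (θ₁ θ₂ : ℝ) :
    Norm.norm (((r * Real.sin θ₁ : ℝ) : ℂ) * Complex.exp ((θ₁:ℂ) * I)
      - ((r * Real.sin θ₂ : ℝ) : ℂ) * Complex.exp ((θ₂:ℂ) * I))
    = r * |Real.sin (θ₁ - θ₂)| := by
  rw [gamma_sub, norm_mul, norm_mul, Complex.norm_real, Complex.norm_real,
    Complex.norm_exp_ofReal_mul_I, Real.norm_eq_abs, Real.norm_eq_abs, _root_.abs_of_nonneg hr]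
  ring


lemma countable_bad {Q : ℂ → ℂ} (hQ : MeromorphicOn Q {z : ℂ | 0 ≤ z.im}) :
    Set.Countable {z : ℂ | 0 < z.im ∧ ¬ AnalyticAt ℂ Q z} := by
  set S := {z : ℂ | 0 < z.im ∧ ¬ AnalyticAt ℂ Q z} with hSdef
  have hdisc : DiscreteTopology S := by
    rw [discreteTopology_subtype_iff]
    intro z hz
    have hm : MeromorphicAt Q z := hQ z (le_of_lt hz.1)
    have h1 : ∀ᶠ w in 𝓝[≠] z, AnalyticAt ℂ Q w := hm.eventually_analyticAt
    rw [inf_principal_eq_bot]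
    exact h1.mono fun w hw hmem => hmem.2 hw
  have : TopologicalSpace.SeparableSpace S := inferInstance
  rw [TopologicalSpace.separableSpace_iff_countable] at this
  exact countable_coe_iff.mp this

lemma aemeasurable_logplus_comp {Q : ℂ → ℂ} (hQ : MeromorphicOn Q {z : ℂ | 0 ≤ z.im})
    {V : Set (ℝ × ℝ)} (hV : MeasurableSet V) {ψ : ℝ × ℝ → ℂ} (hψ : Continuous ψ)
    (him : ∀ p ∈ V, 0 < (ψ p).im)
    (hfib : ∀ z : ℂ, Set.Countable {p | p ∈ V ∧ ψ p = z}) :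
    AEMeasurable (fun p => logplus (Norm.norm (Q (ψ p))))
      ((volume : Measure (ℝ × ℝ)).restrict V) := by
  haveI : NullSingletonClass (volume : Measure (ℝ × ℝ)) := by
    rw [MeasureTheory.Measure.volume_eq_prod]; infer_instance
  set S := {z : ℂ | 0 < z.im ∧ ¬ AnalyticAt ℂ Q z} with hSdef
  have hS : S.Countable := countable_bad hQ
  set N := {p | p ∈ V ∧ ψ p ∈ S} with hNdef
  have hN : N.Countable := by
    have hsub : N ⊆ ⋃ z ∈ S, {p | p ∈ V ∧ ψ p = z} :=
      fun p hp => mem_biUnion hp.2 ⟨hp.1, rfl⟩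
    exact (hS.biUnion fun z _ => hfib z).mono hsub
  have hNnull : (volume : Measure (ℝ × ℝ)) N = 0 := hN.measure_zero _
  have hNmeas : MeasurableSet N := hN.measurableSet
  have hcont : ContinuousOn (fun p => logplus (Norm.norm (Q (ψ p)))) (V \ N) := by
    intro p hp
    have han : AnalyticAt ℂ Q (ψ p) := by
      by_contra hcon
      exact hp.2 ⟨hp.1, him p hp.1, hcon⟩
    exact ((continuous_logplus.comp continuous_norm).continuousAt.comp
      (han.continuousAt.comp hψ.continuousAt)).continuousWithinAt
  have h1 := hcont.aemeasurable (μ := (volume : Measure (ℝ × ℝ))) (hV.diff hNmeas)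
  have h2 : (volume : Measure (ℝ × ℝ)).restrict (V \ N) = volume.restrict V :=
    Measure.restrict_congr_set
      (diff_ae_eq_self.mpr (measure_mono_null inter_subset_right hNnull))
  rwa [h2] at h1


lemma arcsin_sin_le {x : ℝ} (hx : 0 ≤ x) : Real.arcsin (Real.sin x) ≤ x := by
  rcases le_or_gt x (Real.pi/2) with h | h
  · rw [Real.arcsin_sin (by linarith [Real.pi_pos]) h]
  · exact (Real.arcsin_le_pi_div_two _).trans h.le

lemma sin_ge_of_mem_Icc {r θ : ℝ} (hr : 1 < r)
    (hθ : θ ∈ Icc (Real.arcsin (1/r)) (Real.pi - Real.arcsin (1/r))) : 1/r ≤ Real.sin θ := by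
  have hπ := Real.pi_pos
  have hr0 : (0:ℝ) < r := by linarith
  have h1r : (0:ℝ) < 1/r := by positivity
  have h1r' : 1/r < 1 := by rw [div_lt_one hr0]; exact hr
  set a := Real.arcsin (1/r) with ha_def
  have ha_pos : 0 < a := Real.arcsin_pos.mpr h1r
  have ha_le : a ≤ Real.pi/2 := Real.arcsin_le_pi_div_two _
  have hsin_a : Real.sin a = 1/r := Real.sin_arcsin (by linarith) h1r'.le
  obtain ⟨hθ1, hθ2⟩ := hθ
  have hmono := Real.strictMonoOn_sin.monotoneOn
  rcases le_or_gt θ (Real.pi/2) with hle | hlt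
  · have h := hmono (mem_Icc.mpr ⟨by linarith, ha_le⟩)
      (mem_Icc.mpr ⟨by linarith, hle⟩) hθ1
    rwa [hsin_a] at h
  · have h2 : Real.sin (Real.pi - θ) = Real.sin θ := Real.sin_pi_sub θ
    have h := hmono (mem_Icc.mpr ⟨by linarith, ha_le⟩)
      (show Real.pi - θ ∈ Icc (-(Real.pi/2)) (Real.pi/2) from
        mem_Icc.mpr ⟨by linarith, by linarith⟩)
      (show a ≤ Real.pi - θ by linarith)
    rw [hsin_a, h2] at h
    exact h

lemma sin_set_eq {r : ℝ} (hr : 1 < r) :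
    {θ | 1/r ≤ Real.sin θ} ∩ Ioo 0 Real.pi
      = Icc (Real.arcsin (1/r)) (Real.pi - Real.arcsin (1/r)) := by
  have hπ := Real.pi_pos
  have hr0 : (0:ℝ) < r := by linarith
  have h1r : (0:ℝ) < 1/r := by positivity
  have h1r' : 1/r < 1 := by rw [div_lt_one hr0]; exact hr
  have ha_pos : 0 < Real.arcsin (1/r) := Real.arcsin_pos.mpr h1r
  have ha_le : Real.arcsin (1/r) ≤ Real.pi/2 := Real.arcsin_le_pi_div_two _
  ext θ
  constructor
  · rintro ⟨hs, hθ1, hθ2⟩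
    simp only [mem_setOf_eq] at hs
    constructor
    · calc Real.arcsin (1/r) ≤ Real.arcsin (Real.sin θ) := Real.monotone_arcsin hs
      _ ≤ θ := arcsin_sin_le hθ1.le
    · have h2 : Real.sin (Real.pi - θ) = Real.sin θ := Real.sin_pi_sub θ
      have : Real.arcsin (1/r) ≤ Real.pi - θ := by
        calc Real.arcsin (1/r) ≤ Real.arcsin (Real.sin (Real.pi - θ)) := by
              rw [h2]; exact Real.monotone_arcsin hs
        _ ≤ Real.pi - θ := arcsin_sin_le (by linarith)
      linarith
  · intro hθ
    have h1 := sin_ge_of_mem_Icc hr hθ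
    obtain ⟨hθ1, hθ2⟩ := hθ
    exact ⟨h1, by constructor <;> [linarith; linarith]⟩

lemma polar_eq {ρ₁ ρ₂ θ₁ θ₂ : ℝ} (h1 : 0 < ρ₁) (h2 : 0 < ρ₂)
    (hθ₁ : θ₁ ∈ Ioo 0 Real.pi) (hθ₂ : θ₂ ∈ Ioo 0 Real.pi)
    (h : (ρ₁:ℂ) * Complex.exp ((θ₁:ℂ) * I) = (ρ₂:ℂ) * Complex.exp ((θ₂:ℂ) * I)) :
    ρ₁ = ρ₂ ∧ θ₁ = θ₂ := by
  have hπ := Real.pi_pos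
  have habs : ρ₁ = ρ₂ := by
    have := congrArg Norm.norm h
    simpa [Complex.norm_exp_ofReal_mul_I, Complex.norm_real, Real.norm_eq_abs,
      _root_.abs_of_pos h1, _root_.abs_of_pos h2] using this
  refine ⟨habs, ?_⟩
  rw [habs] at h
  have hρ : (ρ₂ : ℂ) ≠ 0 := by exact_mod_cast h2.ne'
  have hexp : Complex.exp ((θ₁:ℂ) * I) = Complex.exp ((θ₂:ℂ) * I) :=
    mul_left_cancel₀ hρ h
  obtain ⟨n, hn⟩ := Complex.exp_eq_exp_iff_exists_int.mp hexp
  have him := congrArg Complex.im hn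
  simp only [Complex.mul_im, Complex.ofReal_re, Complex.I_im, Complex.ofReal_im,
    Complex.I_re, Complex.add_im, Complex.mul_re] at him
  -- him : θ₁ = θ₂ + n * (2π)  (roughly)
  have him' : θ₁ = θ₂ + (n:ℝ) * (2*Real.pi) := by
    have h2' := congrArg Complex.im hn
    push_cast at h2'
    simpa using h2'
  have hn1 : (n:ℝ) < 1 := by nlinarith [hθ₁.1, hθ₁.2, hθ₂.1, hθ₂.2]
  have hn2 : (-1:ℝ) < n := by nlinarith [hθ₁.1, hθ₁.2, hθ₂.1, hθ₂.2]
  have hn0 : n = 0 := by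
    have ha : n < 1 := by exact_mod_cast hn1
    have hb : -1 < n := by exact_mod_cast hn2
    omega
  rw [hn0] at him'
  simpa using him'



lemma rpow_neg_half_nonneg (x : ℝ) : 0 ≤ x ^ (-(1:ℝ)/2) := by
  rcases lt_or_ge x 0 with h | h
  · rw [Real.rpow_def_of_neg h,
      show (-(1:ℝ)/2) * Real.pi = -(Real.pi/2) by ring, Real.cos_neg, Real.cos_pi_div_two,
      mul_zero]
  · exact Real.rpow_nonneg h _

lemma neg_log_le_rpow {x : ℝ} (hx : 0 < x) : -Real.log x ≤ 2 * x ^ (-(1:ℝ)/2) := by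
  have h0 : (0:ℝ) < x ^ (-(1:ℝ)/2) := Real.rpow_pos_of_pos hx _
  have h1 : Real.log (x ^ (-(1:ℝ)/2)) ≤ x ^ (-(1:ℝ)/2) :=
    (Real.log_le_sub_one_of_pos h0).trans (by linarith)
  rw [Real.log_rpow hx] at h1
  linarith

lemma abs_sin_ge {x : ℝ} (h : |x| ≤ Real.pi/2) : 2/Real.pi * |x| ≤ |Real.sin x| := by
  have hπ := Real.pi_pos
  rcases abs_cases x with ⟨h1, h2⟩ | ⟨h1, h2⟩
  · rw [h1] at h ⊢
    rw [_root_.abs_of_nonneg (Real.sin_nonneg_of_nonneg_of_le_pi h2 (by linarith))]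
    exact Real.mul_le_sin h2 h
  · rw [h1] at h ⊢
    have h3 : Real.sin (-x) = -Real.sin x := Real.sin_neg x
    have h4 : 2/Real.pi * (-x) ≤ Real.sin (-x) := Real.mul_le_sin (by linarith) h
    rw [h3] at h4
    have hp : 0 ≤ 2/Real.pi * (-x) := mul_nonneg (by positivity) (by linarith)
    have : |Real.sin x| = -Real.sin x := by
      rw [abs_of_nonpos]; linarith
    linarith [this]

lemma integrableOn_curve {Q : ℂ → ℂ} (hQ : MeromorphicOn Q {z : ℂ | 0 ≤ z.im})
    {r : ℝ} (hr : 1 < r) :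
    IntegrableOn (fun θ =>
        logplus (Norm.norm (Q (((r * Real.sin θ : ℝ) : ℂ) * Complex.exp ((θ:ℂ) * I))))
          / (r * Real.sin θ ^ 2))
      (Icc (Real.arcsin (1/r)) (Real.pi - Real.arcsin (1/r))) := by
  have hπ := Real.pi_pos
  have hr0 : (0:ℝ) < r := by linarith
  have h1r : (0:ℝ) < 1/r := by positivity
  have h1r' : 1/r < 1 := by rw [div_lt_one hr0]; exact hr
  set a := Real.arcsin (1/r) with ha_def
  set K := Icc a (Real.pi - a) with hK_def
  set γ : ℝ → ℂ := fun θ => ((r * Real.sin θ : ℝ) : ℂ) * Complex.exp ((θ:ℂ) * I) with hγ_def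
  set F : ℝ → ℝ := fun θ => logplus (Norm.norm (Q (γ θ))) with hF_def
  have ha_pos : 0 < a := Real.arcsin_pos.mpr h1r
  have ha_le : a ≤ Real.pi/2 := Real.arcsin_le_pi_div_two _
  have hsin_a : Real.sin a = 1/r := Real.sin_arcsin (by linarith) h1r'.le
  have hγcont : Continuous γ := by
    apply Continuous.mul
    · exact Complex.continuous_ofReal.comp (continuous_const.mul Real.continuous_sin)
    · exact Complex.continuous_exp.comp (Complex.continuous_ofReal.mul continuous_const)
  have hsinK : ∀ θ ∈ K, 1/r ≤ Real.sin θ := by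
    intro θ hθ
    obtain ⟨hθ1, hθ2⟩ := hθ
    have hmono := Real.strictMonoOn_sin.monotoneOn
    rcases le_or_gt θ (Real.pi/2) with hle | hlt
    · have h := hmono (mem_Icc.mpr ⟨by linarith, ha_le⟩)
        (mem_Icc.mpr ⟨by linarith, hle⟩) hθ1
      rwa [hsin_a] at h
    · have h2 : Real.sin (Real.pi - θ) = Real.sin θ := Real.sin_pi_sub θ
      have h := hmono (mem_Icc.mpr ⟨by linarith, ha_le⟩)
        (show Real.pi - θ ∈ Icc (-(Real.pi/2)) (Real.pi/2) from
          mem_Icc.mpr ⟨by linarith, by linarith⟩)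
        (show a ≤ Real.pi - θ by linarith)
      rw [hsin_a, h2] at h
      exact h
  -- main local integrability
  have hloc : LocallyIntegrableOn F K volume := by
    intro θ₀ hθ₀
    have hs0 : 0 < Real.sin θ₀ := lt_of_lt_of_le h1r (hsinK θ₀ hθ₀)
    set z₀ := γ θ₀ with hz₀
    have him0 : 0 < z₀.im := by
      rw [hz₀, hγ_def]; rw [im_mul_exp]; exact mul_pos (mul_pos hr0 hs0) hs0
    have hm : MeromorphicAt Q z₀ := hQ z₀ (le_of_lt him0)
    obtain ⟨n, hn⟩ := hm
    set h : ℂ → ℂ := fun z => (z - z₀)^n * Q z with hh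
    have hnA : AnalyticAt ℂ h z₀ := by simpa [hh, smul_eq_mul] using hn
    set C := Norm.norm (h z₀) + 1 with hC
    have hCpos : 0 < C := by positivity
    have hev : ∀ᶠ z in 𝓝 z₀, AnalyticAt ℂ h z := hnA.eventually_analyticAt
    have hcA : ContinuousAt (fun z => Norm.norm (h z)) z₀ :=
      continuous_norm.continuousAt.comp hnA.continuousAt
    have hbd : ∀ᶠ z in 𝓝 z₀, Norm.norm (h z) ≤ C := by
      exact Filter.Tendsto.eventually_le_const
        (show Norm.norm (h z₀) < C by rw [hC]; linarith) hcA
    obtain ⟨ε, hε, hball⟩ := Metric.eventually_nhds_iff.mp (hev.and hbd)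
    set δ := min (1/2 : ℝ) (ε/(2*r)) with hδ_def
    have hδ : 0 < δ := by
      apply lt_min (by norm_num); positivity
    have hδ1 : δ ≤ 1/2 := min_le_left _ _
    have hδ2 : δ ≤ ε/(2*r) := min_le_right _ _
    set s := Ioo (θ₀ - δ) (θ₀ + δ) with hs_def
    have hs_mem : s ∈ 𝓝 θ₀ := Ioo_mem_nhds (by linarith) (by linarith)
    -- distance bounds
    have hdist : ∀ θ ∈ s, dist (γ θ) z₀ < ε := by
      intro θ hθ
      have habs : |θ - θ₀| < δ := by
        rw [abs_lt]; constructor <;> [linarith [hθ.1]; linarith [hθ.2]]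
      have : dist (γ θ) z₀ = r * |Real.sin (θ - θ₀)| := by
        rw [Complex.dist_eq, hz₀, hγ_def]; exact gamma_dist hr0.le θ θ₀
      rw [this]
      have h2 : |Real.sin (θ - θ₀)| ≤ |θ - θ₀| := Real.abs_sin_le_abs
      have he : r * (ε/(2*r)) = ε/2 := by field_simp
      have : r * δ ≤ ε / 2 := by
        calc r * δ ≤ r * (ε/(2*r)) := mul_le_mul_of_nonneg_left hδ2 hr0.le
        _ = ε/2 := he
      nlinarith
    have hlow : ∀ θ ∈ s, 2/Real.pi * |θ - θ₀| ≤ Norm.norm (γ θ - z₀) := by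
      intro θ hθ
      have habs : |θ - θ₀| < δ := by
        rw [abs_lt]; constructor <;> [linarith [hθ.1]; linarith [hθ.2]]
      have key1 : Norm.norm (γ θ - z₀) = r * |Real.sin (θ - θ₀)| := by
        rw [hz₀, hγ_def]; exact gamma_dist hr0.le θ θ₀
      have key2 : 2/Real.pi * |θ - θ₀| ≤ |Real.sin (θ - θ₀)| := by
        apply abs_sin_ge
        have : (1:ℝ)/2 ≤ Real.pi/2 := by linarith [Real.pi_gt_three]
        linarith
      rw [key1]
      nlinarith [abs_nonneg (θ - θ₀), abs_nonneg (Real.sin (θ - θ₀))]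
    -- dominating function
    set D : ℝ → ℝ := fun θ => logplus C + n * (logplus (Real.pi/2)
      + 2*((θ-θ₀) ^ (-(1:ℝ)/2) + (θ₀-θ) ^ (-(1:ℝ)/2))) with hD_def
    have hDint : IntegrableOn D s := by
      have hp1 : IntervalIntegrable (fun x : ℝ => x ^ (-(1:ℝ)/2)) volume (-δ) δ :=
        intervalIntegral.intervalIntegrable_rpow' (by norm_num)
      have hp2 : IntervalIntegrable (fun θ : ℝ => (θ - θ₀) ^ (-(1:ℝ)/2)) volume
          (-δ + θ₀) (δ + θ₀) := hp1.comp_sub_right θ₀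
      have hp3 : IntervalIntegrable (fun θ : ℝ => (θ₀ - θ) ^ (-(1:ℝ)/2)) volume
          (θ₀ - (-δ)) (θ₀ - δ) := hp1.comp_sub_left θ₀
      have hDiv : IntervalIntegrable D volume (θ₀ - δ) (θ₀ + δ) := by
        have e1 : θ₀ - δ = -δ + θ₀ := by ring
        have e2 : θ₀ + δ = δ + θ₀ := by ring
        apply IntervalIntegrable.add intervalIntegrable_const
        apply IntervalIntegrable.const_mul
        apply IntervalIntegrable.add intervalIntegrable_const
        apply IntervalIntegrable.const_mul
        apply IntervalIntegrable.add
        · rw [e1, e2]; exact hp2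
        · have := hp3.symm
          rw [show θ₀ - δ = θ₀ - δ by rfl]
          have e3 : θ₀ - (-δ) = θ₀ + δ := by ring
          rw [e3] at this
          exact this
      have := hDiv.1
      exact this.mono_set Ioo_subset_Ioc_self
    -- measurability of F on s
    have hFmeas : AEMeasurable F (volume.restrict s) := by
      have hcont : ContinuousOn F (s \ {θ₀}) := by
        intro θ hθ
        have hne : γ θ ≠ z₀ := by
          have := hlow θ hθ.1
          have hθne : θ ≠ θ₀ := by simpa using hθ.2
          have habs : 0 < |θ - θ₀| := abs_pos.mpr (sub_ne_zero.mpr hθne)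
          intro e
          rw [e, sub_self] at this
          simp only [norm_zero] at this
          have hp : 0 < 2/Real.pi * |θ - θ₀| := by positivity
          linarith
        have hballθ := hball (hdist θ hθ.1)
        have hQc : ContinuousAt Q (γ θ) := by
          have h1 : ContinuousAt (fun z => h z * ((z - z₀)^n)⁻¹) (γ θ) := by
            apply ContinuousAt.mul hballθ.1.continuousAt
            apply ContinuousAt.inv₀
            · exact ContinuousAt.pow (continuousAt_id.sub continuousAt_const) n
            · exact pow_ne_zero _ (sub_ne_zero.mpr hne)
          apply h1.congr
          have hev2 : ∀ᶠ z in 𝓝 (γ θ), z ≠ z₀ := eventually_ne_nhds hne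
          filter_upwards [hev2] with z hz
          simp only [hh]
          rw [mul_comm ((z - z₀)^n) (Q z)]
          exact mul_inv_cancel_right₀ (pow_ne_zero n (sub_ne_zero.mpr hz)) (Q z)
        exact ((continuous_logplus.comp continuous_norm).continuousAt.comp
          (hQc.comp hγcont.continuousAt)).continuousWithinAt
      have hmeas1 := hcont.aemeasurable (μ := (volume : Measure ℝ))
        ((isOpen_Ioo.sdiff isClosed_singleton).measurableSet)
      have h2 : (volume : Measure ℝ).restrict (s \ {θ₀}) = volume.restrict s :=
        Measure.restrict_congr_set
          (diff_ae_eq_self.mpr (measure_mono_null inter_subset_right (measure_singleton θ₀)))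
      rwa [h2] at hmeas1
    -- the a.e. bound
    have hbound : ∀ᵐ θ ∂(volume.restrict s), ‖F θ‖ ≤ D θ := by
      have hne_ae : ∀ᵐ θ : ℝ, θ ≠ θ₀ := by
        filter_upwards [compl_mem_ae_iff.mpr (measure_singleton θ₀)] with x hx
        simpa using hx
      filter_upwards [ae_restrict_mem measurableSet_Ioo, ae_restrict_of_ae hne_ae] with θ hθ hθne
      set d := |θ - θ₀| with hd_def
      have hd : 0 < d := abs_pos.mpr (sub_ne_zero.mpr hθne)
      have hlow' := hlow θ hθ
      have hxpos : 0 < Norm.norm (γ θ - z₀) := lt_of_lt_of_le (by positivity) hlow'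
      have hQb : Norm.norm (Q (γ θ)) ≤ C * ((Norm.norm (γ θ - z₀))⁻¹)^n := by
        have hb := (hball (hdist θ hθ)).2
        simp only [hh, norm_mul, norm_pow] at hb
        have hXn : (0:ℝ) < (Norm.norm (γ θ - z₀))^n := by positivity
        rw [inv_pow, ← div_eq_mul_inv, le_div_iff₀ hXn]
        calc Norm.norm (Q (γ θ)) * (Norm.norm (γ θ - z₀))^n
            = (Norm.norm (γ θ - z₀))^n * Norm.norm (Q (γ θ)) := mul_comm _ _
          _ ≤ C := hb
      have step1 : F θ ≤ logplus C + n * logplus ((Norm.norm (γ θ - z₀))⁻¹) := by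
        calc F θ ≤ logplus (C * ((Norm.norm (γ θ - z₀))⁻¹)^n) :=
              logplus_mono (norm_nonneg _) hQb
        _ ≤ logplus C + logplus (((Norm.norm (γ θ - z₀))⁻¹)^n) :=
              logplus_mul_le hCpos.le (by positivity)
        _ ≤ logplus C + n * logplus ((Norm.norm (γ θ - z₀))⁻¹) := by
              have := logplus_pow_le ((Norm.norm (γ θ - z₀))⁻¹) (by positivity) n
              linarith
      have step2 : logplus ((Norm.norm (γ θ - z₀))⁻¹) ≤
          logplus (Real.pi/2) + logplus (d⁻¹) := by
        have hinv : (Norm.norm (γ θ - z₀))⁻¹ ≤ (Real.pi/2) * d⁻¹ := by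
          have h1 : (Norm.norm (γ θ - z₀))⁻¹ ≤ (2/Real.pi * d)⁻¹ := by
            exact inv_anti₀ (by positivity) hlow'
          rwa [mul_inv, ← div_eq_mul_inv, inv_div] at h1
        calc logplus ((Norm.norm (γ θ - z₀))⁻¹)
            ≤ logplus ((Real.pi/2) * d⁻¹) := logplus_mono (by positivity) hinv
        _ ≤ logplus (Real.pi/2) + logplus (d⁻¹) := logplus_mul_le (by positivity) (by positivity)
      have step3 : logplus (d⁻¹) ≤ 2 * d ^ (-(1:ℝ)/2) := by
        rw [logplus, Real.log_inv]
        apply max_le (neg_log_le_rpow hd)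
        positivity
      have step4 : d ^ (-(1:ℝ)/2) ≤ (θ-θ₀) ^ (-(1:ℝ)/2) + (θ₀-θ) ^ (-(1:ℝ)/2) := by
        rcases abs_cases (θ - θ₀) with ⟨h1, _⟩ | ⟨h1, _⟩
        · rw [hd_def, h1]
          linarith [rpow_neg_half_nonneg (θ₀ - θ)]
        · rw [hd_def, h1, neg_sub]
          linarith [rpow_neg_half_nonneg (θ - θ₀)]
      rw [Real.norm_eq_abs, _root_.abs_of_nonneg (logplus_nonneg _)]
      have hn0 : (0:ℝ) ≤ n := Nat.cast_nonneg n
      calc F θ ≤ logplus C + n * logplus ((Norm.norm (γ θ - z₀))⁻¹) := step1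
      _ ≤ logplus C + n * (logplus (Real.pi/2) + logplus (d⁻¹)) := by
            have := mul_le_mul_of_nonneg_left step2 hn0; linarith
      _ ≤ logplus C + n * (logplus (Real.pi/2) + 2*((θ-θ₀) ^ (-(1:ℝ)/2) + (θ₀-θ) ^ (-(1:ℝ)/2))) := by
            have h5 : logplus (d⁻¹) ≤ 2*((θ-θ₀) ^ (-(1:ℝ)/2) + (θ₀-θ) ^ (-(1:ℝ)/2)) := by
              calc logplus (d⁻¹) ≤ 2 * d ^ (-(1:ℝ)/2) := step3
              _ ≤ 2*((θ-θ₀) ^ (-(1:ℝ)/2) + (θ₀-θ) ^ (-(1:ℝ)/2)) := by linarith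
            have := mul_le_mul_of_nonneg_left
              (add_le_add_left h5 (logplus (Real.pi/2))) hn0
            linarith
      _ = D θ := rfl
    exact ⟨s, mem_nhdsWithin_of_mem_nhds hs_mem,
      hDint.mono' hFmeas.aestronglyMeasurable hbound⟩
  have hFK : IntegrableOn F K := hloc.integrableOn_isCompact isCompact_Icc
  -- multiply by continuous factor
  have hcontmul : ContinuousOn (fun θ => (r * Real.sin θ^2)⁻¹) K := by
    apply ContinuousOn.inv₀ (by fun_prop)
    intro θ hθ
    have := hsinK θ hθ
    have : 0 < Real.sin θ := lt_of_lt_of_le h1r this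
    positivity
  have hmul := hFK.mul_continuousOn hcontmul isCompact_Icc
  exact hmul.congr_fun (fun θ _ => (div_eq_mul_inv _ _).symm) measurableSet_Icc

set_option maxHeartbeats 2000000 in
/-- Lemma 2 (Levin–Ostrovskii): for `Q` meromorphic in the closed upper half-plane and
`R ≥ 1`, `∫_R^∞ m_{0π}(r,Q)/r³ dr ≤ ∫_R^∞ 𝔪(r,Q)/r² dr`. -/
theorem levin_ostrovskii_integral_inequality (Q : ℂ → ℂ)
    (hQ : MeromorphicOn Q {z : ℂ | 0 ≤ z.im}) (R : ℝ) (hR : 1 ≤ R) :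
    ∫⁻ r in Ioi R, ENNReal.ofReal (mHalfCircle Q r / r ^ 3)
      ≤ ∫⁻ r in Ioi R, ENNReal.ofReal (tsujiSmallM Q r / r ^ 2) := by
  have hπ := Real.pi_pos
  have hR0 : (0:ℝ) < R := by linarith
  have hsinpos : ∀ θ : ℝ, θ ∈ Ioo 0 Real.pi → 0 < Real.sin θ :=
    fun θ hθ => Real.sin_pos_of_pos_of_lt_pi hθ.1 hθ.2
  -- Step L : pointwise bound for the left side
  have stepL : ∀ r ∈ Ioi R, ENNReal.ofReal (mHalfCircle Q r / r ^ 3)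
      ≤ ∫⁻ θ in Ioo 0 Real.pi, ENNReal.ofReal (logplus (Norm.norm (Q (((r):ℂ) * Complex.exp (((θ):ℂ) * Complex.I)))) * (1/(2*Real.pi) / (r)^3)) := by
    intro r hr
    have hr0 : (0:ℝ) < r := lt_trans hR0 hr
    have e1 : mHalfCircle Q r / r ^ 3 =
        (∫ θ in Ioc 0 Real.pi, logplus (Norm.norm (Q (((r):ℂ) * Complex.exp (((θ):ℂ) * Complex.I))))) * (1/(2*Real.pi) / (r)^3) := by
      unfold mHalfCircle
      rw [intervalIntegral.integral_of_le hπ.le]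
      ring
    rw [e1, ENNReal.ofReal_mul' (by positivity)]
    calc ENNReal.ofReal (∫ θ in Ioc 0 Real.pi, logplus (Norm.norm (Q (((r):ℂ) * Complex.exp (((θ):ℂ) * Complex.I)))))
          * ENNReal.ofReal (1/(2*Real.pi) / (r)^3)
        ≤ (∫⁻ θ in Ioc 0 Real.pi, ENNReal.ofReal (logplus (Norm.norm (Q (((r):ℂ) * Complex.exp (((θ):ℂ) * Complex.I))))))
          * ENNReal.ofReal (1/(2*Real.pi) / (r)^3) :=
          mul_le_mul_left (ofReal_setIntegral_le (fun θ => logplus_nonneg _)) _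
      _ = ∫⁻ θ in Ioc 0 Real.pi, ENNReal.ofReal (logplus (Norm.norm (Q (((r):ℂ) * Complex.exp (((θ):ℂ) * Complex.I)))))
          * ENNReal.ofReal (1/(2*Real.pi) / (r)^3) :=
          (lintegral_mul_const' _ _ ENNReal.ofReal_ne_top).symm
      _ = ∫⁻ θ in Ioc 0 Real.pi, ENNReal.ofReal (logplus (Norm.norm (Q (((r):ℂ) * Complex.exp (((θ):ℂ) * Complex.I)))) * (1/(2*Real.pi) / (r)^3)) := by
          apply lintegral_congr
          intro θ
          rw [← ENNReal.ofReal_mul (logplus_nonneg _)]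
      _ = ∫⁻ θ in Ioo 0 Real.pi, ENNReal.ofReal (logplus (Norm.norm (Q (((r):ℂ) * Complex.exp (((θ):ℂ) * Complex.I)))) * (1/(2*Real.pi) / (r)^3)) :=
          (setLIntegral_congr Ioo_ae_eq_Ioc).symm
  -- measurability facts
  have hVmeas : MeasurableSet (Ioi R ×ˢ Ioo 0 Real.pi) :=
    measurableSet_Ioi.prod measurableSet_Ioo
  have hprodm : (volume.restrict (Ioi R)).prod (volume.restrict (Ioo 0 Real.pi))
      = (volume : Measure (ℝ × ℝ)).restrict (Ioi R ×ˢ Ioo 0 Real.pi) := by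
    rw [Measure.prod_restrict, ← Measure.volume_eq_prod]
  -- swap 1
  have hmeas₁ : AEMeasurable
      (Function.uncurry (fun r θ : ℝ => ENNReal.ofReal (logplus (Norm.norm (Q (((r):ℂ) * Complex.exp (((θ):ℂ) * Complex.I)))) * (1/(2*Real.pi) / (r)^3))))
      ((volume.restrict (Ioi R)).prod (volume.restrict (Ioo 0 Real.pi))) := by
    rw [hprodm]
    have hψ : Continuous (fun p : ℝ × ℝ => ((p.1:ℂ)) * Complex.exp ((p.2:ℂ) * Complex.I)) := by
      fun_prop
    have hbase := aemeasurable_logplus_comp hQ hVmeas hψ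
      (fun p hp => by
        rw [im_mul_exp]
        exact mul_pos (lt_trans hR0 (mem_prod.mp hp).1) (hsinpos p.2 (mem_prod.mp hp).2))
      (fun z => Set.Subsingleton.countable (by
        rintro p ⟨hp, hpz⟩ q ⟨hq, hqz⟩
        have h1 : (0:ℝ) < p.1 := lt_trans hR0 (mem_prod.mp hp).1
        have h2 : (0:ℝ) < q.1 := lt_trans hR0 (mem_prod.mp hq).1
        have hpe := polar_eq h1 h2 (mem_prod.mp hp).2 (mem_prod.mp hq).2 (hpz.trans hqz.symm)
        exact Prod.ext hpe.1 hpe.2))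
    have hg : Measurable (fun p : ℝ × ℝ => 1/(2*Real.pi) / (p.1)^3) :=
      measurable_const.div (measurable_fst.pow_const 3)
    exact ENNReal.measurable_ofReal.comp_aemeasurable (hbase.mul hg.aemeasurable)
  have hswap₁ := lintegral_lintegral_swap hmeas₁
  -- swap 2
  have hmeas₂ : AEMeasurable
      (Function.uncurry (fun r θ : ℝ => ({q : ℝ × ℝ | 1/q.1 ≤ Real.sin q.2}).indicator (fun q => ENNReal.ofReal (logplus (Norm.norm (Q (((q.1 * Real.sin q.2 : ℝ):ℂ) * Complex.exp (((q.2):ℂ) * Complex.I)))) * (1/(2*Real.pi) / ((q.1)^3 * Real.sin q.2^2)))) (r, θ)))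
      ((volume.restrict (Ioi R)).prod (volume.restrict (Ioo 0 Real.pi))) := by
    rw [hprodm]
    have hψ : Continuous (fun p : ℝ × ℝ =>
        ((p.1 * Real.sin p.2 : ℝ):ℂ) * Complex.exp ((p.2:ℂ) * Complex.I)) := by
      fun_prop
    have hbase := aemeasurable_logplus_comp hQ hVmeas hψ
      (fun p hp => by
        rw [im_mul_exp]
        have h1 : (0:ℝ) < p.1 := lt_trans hR0 (mem_prod.mp hp).1
        have h2 := hsinpos p.2 (mem_prod.mp hp).2
        exact mul_pos (mul_pos h1 h2) h2)
      (fun z => Set.Subsingleton.countable (by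
        rintro p ⟨hp, hpz⟩ q ⟨hq, hqz⟩
        have h1 : (0:ℝ) < p.1 := lt_trans hR0 (mem_prod.mp hp).1
        have h2 : (0:ℝ) < q.1 := lt_trans hR0 (mem_prod.mp hq).1
        have hs1 := hsinpos p.2 (mem_prod.mp hp).2
        have hs2 := hsinpos q.2 (mem_prod.mp hq).2
        have hpe := polar_eq (mul_pos h1 hs1) (mul_pos h2 hs2)
          (mem_prod.mp hp).2 (mem_prod.mp hq).2 (hpz.trans hqz.symm)
        have hθeq : p.2 = q.2 := hpe.2
        have hρeq := hpe.1
        rw [hθeq] at hρeq hs1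
        exact Prod.ext (mul_right_cancel₀ hs1.ne' hρeq) hθeq))
    have hg : Measurable (fun p : ℝ × ℝ => 1/(2*Real.pi) / ((p.1)^3 * Real.sin p.2^2)) :=
      measurable_const.div ((measurable_fst.pow_const 3).mul
        ((Real.measurable_sin.comp measurable_snd).pow_const 2))
    have hv : AEMeasurable (fun q : ℝ × ℝ => ENNReal.ofReal (logplus (Norm.norm (Q (((q.1 * Real.sin q.2 : ℝ):ℂ) * Complex.exp (((q.2):ℂ) * Complex.I)))) * (1/(2*Real.pi) / ((q.1)^3 * Real.sin q.2^2))))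
        ((volume : Measure (ℝ × ℝ)).restrict (Ioi R ×ˢ Ioo 0 Real.pi)) :=
      ENNReal.measurable_ofReal.comp_aemeasurable (hbase.mul hg.aemeasurable)
    have hTmeas : MeasurableSet {q : ℝ × ℝ | 1/q.1 ≤ Real.sin q.2} :=
      measurableSet_le (measurable_const.div measurable_fst)
        (Real.measurable_sin.comp measurable_snd)
    exact hv.indicator hTmeas
  have hswap₂ := lintegral_lintegral_swap hmeas₂
  -- per-θ chain
  have stepT : ∀ θ ∈ Ioo 0 Real.pi,
      (∫⁻ r in Ioi R, ENNReal.ofReal (logplus (Norm.norm (Q (((r):ℂ) * Complex.exp (((θ):ℂ) * Complex.I)))) * (1/(2*Real.pi) / (r)^3)))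
      ≤ ∫⁻ r in Ioi R, ({q : ℝ × ℝ | 1/q.1 ≤ Real.sin q.2}).indicator (fun q => ENNReal.ofReal (logplus (Norm.norm (Q (((q.1 * Real.sin q.2 : ℝ):ℂ) * Complex.exp (((q.2):ℂ) * Complex.I)))) * (1/(2*Real.pi) / ((q.1)^3 * Real.sin q.2^2)))) (r, θ) := by
    intro θ hθ
    have hs : 0 < Real.sin θ := hsinpos θ hθ
    have hs1 : Real.sin θ ≤ 1 := Real.sin_le_one θ
    have hsb : Real.sin θ * max R (1/Real.sin θ) ≤ R := by
      rw [mul_max_of_nonneg _ _ hs.le, mul_one_div, div_self hs.ne']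
      exact max_le (by nlinarith) hR
    have hSmeas : MeasurableSet {u : ℝ | 1/u ≤ Real.sin θ} :=
      measurableSet_le (measurable_const.div measurable_id) measurable_const
    have hslice : (fun r : ℝ => ({q : ℝ × ℝ | 1/q.1 ≤ Real.sin q.2}).indicator (fun q => ENNReal.ofReal (logplus (Norm.norm (Q (((q.1 * Real.sin q.2 : ℝ):ℂ) * Complex.exp (((q.2):ℂ) * Complex.I)))) * (1/(2*Real.pi) / ((q.1)^3 * Real.sin q.2^2)))) (r, θ))
        = ({u : ℝ | 1/u ≤ Real.sin θ}).indicator (fun r => ENNReal.ofReal (logplus (Norm.norm (Q (((r * Real.sin (θ) : ℝ):ℂ) * Complex.exp (((θ):ℂ) * Complex.I)))) * (1/(2*Real.pi) / ((r)^3 * Real.sin (θ)^2)))) := by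
      funext u
      by_cases h : 1/u ≤ Real.sin θ
      · rw [Set.indicator_of_mem (by exact h), Set.indicator_of_mem (by exact h)]
      · rw [Set.indicator_of_notMem (by exact h), Set.indicator_of_notMem (by exact h)]
    have hsub : Ioi (max R (1/Real.sin θ)) ⊆ {u : ℝ | 1/u ≤ Real.sin θ} ∩ Ioi R := by
      intro u hu
      have hu1 : R < u := lt_of_le_of_lt (le_max_left _ _) hu
      have hu2 : 1/Real.sin θ < u := lt_of_le_of_lt (le_max_right _ _) hu
      have hu0 : 0 < u := lt_trans hR0 hu1
      refine ⟨?_, hu1⟩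
      show 1/u ≤ Real.sin θ
      rw [div_le_iff₀ hu0]
      have he : Real.sin θ * (1/Real.sin θ) = 1 := by field_simp
      nlinarith [mul_lt_mul_of_pos_left hu2 hs]
    calc (∫⁻ r in Ioi R, ENNReal.ofReal (logplus (Norm.norm (Q (((r):ℂ) * Complex.exp (((θ):ℂ) * Complex.I)))) * (1/(2*Real.pi) / (r)^3)))
        ≤ ∫⁻ t in Ioi (Real.sin θ * max R (1/Real.sin θ)), ENNReal.ofReal (logplus (Norm.norm (Q (((t):ℂ) * Complex.exp (((θ):ℂ) * Complex.I)))) * (1/(2*Real.pi) / (t)^3)) :=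
          lintegral_mono' (Measure.restrict_mono (Ioi_subset_Ioi hsb) le_rfl) le_rfl
      _ = ENNReal.ofReal (Real.sin θ) * ∫⁻ r in Ioi (max R (1/Real.sin θ)),
            ENNReal.ofReal (logplus (Norm.norm (Q (((Real.sin θ * r : ℝ):ℂ) * Complex.exp (((θ):ℂ) * Complex.I)))) * (1/(2*Real.pi) / (Real.sin θ * r)^3)) :=
          lintegral_Ioi_scale hs _
      _ = ∫⁻ r in Ioi (max R (1/Real.sin θ)), ENNReal.ofReal (logplus (Norm.norm (Q (((r * Real.sin (θ) : ℝ):ℂ) * Complex.exp (((θ):ℂ) * Complex.I)))) * (1/(2*Real.pi) / ((r)^3 * Real.sin (θ)^2))) := by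
          rw [← lintegral_const_mul' _ _ ENNReal.ofReal_ne_top]
          apply lintegral_congr
          intro u
          rw [← ENNReal.ofReal_mul hs.le, mul_comm (Real.sin θ) u]
          congr 1
          rcases eq_or_ne u 0 with hu | hu
          · simp [hu]
          · field_simp
      _ ≤ ∫⁻ r in {u : ℝ | 1/u ≤ Real.sin θ} ∩ Ioi R, ENNReal.ofReal (logplus (Norm.norm (Q (((r * Real.sin (θ) : ℝ):ℂ) * Complex.exp (((θ):ℂ) * Complex.I)))) * (1/(2*Real.pi) / ((r)^3 * Real.sin (θ)^2))) :=
          lintegral_mono' (Measure.restrict_mono hsub le_rfl) le_rfl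
      _ = ∫⁻ r in Ioi R, ({u : ℝ | 1/u ≤ Real.sin θ}).indicator
            (fun r => ENNReal.ofReal (logplus (Norm.norm (Q (((r * Real.sin (θ) : ℝ):ℂ) * Complex.exp (((θ):ℂ) * Complex.I)))) * (1/(2*Real.pi) / ((r)^3 * Real.sin (θ)^2)))) r := by
          rw [lintegral_indicator hSmeas, Measure.restrict_restrict hSmeas]
      _ = ∫⁻ r in Ioi R, ({q : ℝ × ℝ | 1/q.1 ≤ Real.sin q.2}).indicator (fun q => ENNReal.ofReal (logplus (Norm.norm (Q (((q.1 * Real.sin q.2 : ℝ):ℂ) * Complex.exp (((q.2):ℂ) * Complex.I)))) * (1/(2*Real.pi) / ((q.1)^3 * Real.sin q.2^2)))) (r, θ) := by rw [← hslice]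
  -- per-r identification of the right side
  have stepR : ∀ r ∈ Ioi R,
      (∫⁻ θ in Ioo 0 Real.pi, ({q : ℝ × ℝ | 1/q.1 ≤ Real.sin q.2}).indicator (fun q => ENNReal.ofReal (logplus (Norm.norm (Q (((q.1 * Real.sin q.2 : ℝ):ℂ) * Complex.exp (((q.2):ℂ) * Complex.I)))) * (1/(2*Real.pi) / ((q.1)^3 * Real.sin q.2^2)))) (r, θ))
        = ENNReal.ofReal (tsujiSmallM Q r / r ^ 2) := by
    intro r hr
    have hr1 : (1:ℝ) < r := lt_of_le_of_lt hR hr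
    have hr0 : (0:ℝ) < r := by linarith
    have ha2 : Real.arcsin (1/r) ≤ Real.pi - Real.arcsin (1/r) := by
      have := Real.arcsin_le_pi_div_two (1/r); linarith
    have hSmeas : MeasurableSet {u : ℝ | 1/r ≤ Real.sin u} :=
      measurableSet_le measurable_const Real.measurable_sin
    have hint : IntegrableOn
        (fun θ => logplus (Norm.norm (Q (((r * Real.sin θ : ℝ):ℂ) * Complex.exp (((θ):ℂ) * Complex.I)))) / (r * Real.sin θ ^ 2))
        (Ioc (Real.arcsin (1/r)) (Real.pi - Real.arcsin (1/r))) :=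
      (integrableOn_curve hQ hr1).mono_set Ioc_subset_Icc_self
    have hslice : (fun θ : ℝ => ({q : ℝ × ℝ | 1/q.1 ≤ Real.sin q.2}).indicator (fun q => ENNReal.ofReal (logplus (Norm.norm (Q (((q.1 * Real.sin q.2 : ℝ):ℂ) * Complex.exp (((q.2):ℂ) * Complex.I)))) * (1/(2*Real.pi) / ((q.1)^3 * Real.sin q.2^2)))) (r, θ))
        = ({u : ℝ | 1/r ≤ Real.sin u}).indicator (fun θ => ENNReal.ofReal (logplus (Norm.norm (Q (((r * Real.sin (θ) : ℝ):ℂ) * Complex.exp (((θ):ℂ) * Complex.I)))) * (1/(2*Real.pi) / ((r)^3 * Real.sin (θ)^2)))) := by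
      funext u
      by_cases h : 1/r ≤ Real.sin u
      · rw [Set.indicator_of_mem (by exact h), Set.indicator_of_mem (by exact h)]
      · rw [Set.indicator_of_notMem (by exact h), Set.indicator_of_notMem (by exact h)]
    have e1 : tsujiSmallM Q r / r ^ 2 =
        (∫ θ in Ioc (Real.arcsin (1/r)) (Real.pi - Real.arcsin (1/r)),
          logplus (Norm.norm (Q (((r * Real.sin θ : ℝ):ℂ) * Complex.exp (((θ):ℂ) * Complex.I)))) / (r * Real.sin θ ^ 2)) * (1/(2*Real.pi) / (r)^2) := by
      unfold tsujiSmallM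
      rw [intervalIntegral.integral_of_le ha2]
      ring
    calc (∫⁻ θ in Ioo 0 Real.pi, ({q : ℝ × ℝ | 1/q.1 ≤ Real.sin q.2}).indicator (fun q => ENNReal.ofReal (logplus (Norm.norm (Q (((q.1 * Real.sin q.2 : ℝ):ℂ) * Complex.exp (((q.2):ℂ) * Complex.I)))) * (1/(2*Real.pi) / ((q.1)^3 * Real.sin q.2^2)))) (r, θ))
        = ∫⁻ θ in {u : ℝ | 1/r ≤ Real.sin u} ∩ Ioo 0 Real.pi, ENNReal.ofReal (logplus (Norm.norm (Q (((r * Real.sin (θ) : ℝ):ℂ) * Complex.exp (((θ):ℂ) * Complex.I)))) * (1/(2*Real.pi) / ((r)^3 * Real.sin (θ)^2))) := by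
          rw [hslice, lintegral_indicator hSmeas, Measure.restrict_restrict hSmeas]
      _ = ∫⁻ θ in Icc (Real.arcsin (1/r)) (Real.pi - Real.arcsin (1/r)), ENNReal.ofReal (logplus (Norm.norm (Q (((r * Real.sin (θ) : ℝ):ℂ) * Complex.exp (((θ):ℂ) * Complex.I)))) * (1/(2*Real.pi) / ((r)^3 * Real.sin (θ)^2))) := by
          rw [sin_set_eq hr1]
      _ = ∫⁻ θ in Ioc (Real.arcsin (1/r)) (Real.pi - Real.arcsin (1/r)), ENNReal.ofReal (logplus (Norm.norm (Q (((r * Real.sin (θ) : ℝ):ℂ) * Complex.exp (((θ):ℂ) * Complex.I)))) * (1/(2*Real.pi) / ((r)^3 * Real.sin (θ)^2))) :=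
          (setLIntegral_congr Ioc_ae_eq_Icc).symm
      _ = ∫⁻ θ in Ioc (Real.arcsin (1/r)) (Real.pi - Real.arcsin (1/r)),
            ENNReal.ofReal (logplus (Norm.norm (Q (((r * Real.sin θ : ℝ):ℂ) * Complex.exp (((θ):ℂ) * Complex.I)))) / (r * Real.sin θ ^ 2))
              * ENNReal.ofReal (1/(2*Real.pi) / (r)^2) := by
          apply lintegral_congr
          intro θ
          rw [← ENNReal.ofReal_mul (div_nonneg (logplus_nonneg _) (by positivity))]
          congr 1
          rw [div_mul_div_comm, ← mul_div_assoc]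
          congr 1
          ring
      _ = (∫⁻ θ in Ioc (Real.arcsin (1/r)) (Real.pi - Real.arcsin (1/r)),
            ENNReal.ofReal (logplus (Norm.norm (Q (((r * Real.sin θ : ℝ):ℂ) * Complex.exp (((θ):ℂ) * Complex.I)))) / (r * Real.sin θ ^ 2)))
              * ENNReal.ofReal (1/(2*Real.pi) / (r)^2) :=
          lintegral_mul_const' _ _ ENNReal.ofReal_ne_top
      _ = ENNReal.ofReal (∫ θ in Ioc (Real.arcsin (1/r)) (Real.pi - Real.arcsin (1/r)),
            logplus (Norm.norm (Q (((r * Real.sin θ : ℝ):ℂ) * Complex.exp (((θ):ℂ) * Complex.I)))) / (r * Real.sin θ ^ 2))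
              * ENNReal.ofReal (1/(2*Real.pi) / (r)^2) := by
          rw [ofReal_integral_eq_lintegral_ofReal hint
            (Eventually.of_forall (fun θ => div_nonneg (logplus_nonneg _) (by positivity)))]
      _ = ENNReal.ofReal (tsujiSmallM Q r / r ^ 2) := by
          rw [e1, ENNReal.ofReal_mul' (by positivity)]
  -- assemble
  calc ∫⁻ r in Ioi R, ENNReal.ofReal (mHalfCircle Q r / r ^ 3)
      ≤ ∫⁻ r in Ioi R, ∫⁻ θ in Ioo 0 Real.pi, ENNReal.ofReal (logplus (Norm.norm (Q (((r):ℂ) * Complex.exp (((θ):ℂ) * Complex.I)))) * (1/(2*Real.pi) / (r)^3)) :=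
        setLIntegral_mono_ae' measurableSet_Ioi (Eventually.of_forall stepL)
    _ = ∫⁻ θ in Ioo 0 Real.pi, ∫⁻ r in Ioi R, ENNReal.ofReal (logplus (Norm.norm (Q (((r):ℂ) * Complex.exp (((θ):ℂ) * Complex.I)))) * (1/(2*Real.pi) / (r)^3)) := hswap₁
    _ ≤ ∫⁻ θ in Ioo 0 Real.pi, ∫⁻ r in Ioi R, ({q : ℝ × ℝ | 1/q.1 ≤ Real.sin q.2}).indicator (fun q => ENNReal.ofReal (logplus (Norm.norm (Q (((q.1 * Real.sin q.2 : ℝ):ℂ) * Complex.exp (((q.2):ℂ) * Complex.I)))) * (1/(2*Real.pi) / ((q.1)^3 * Real.sin q.2^2)))) (r, θ) :=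
        setLIntegral_mono_ae' measurableSet_Ioo (Eventually.of_forall stepT)
    _ = ∫⁻ r in Ioi R, ∫⁻ θ in Ioo 0 Real.pi, ({q : ℝ × ℝ | 1/q.1 ≤ Real.sin q.2}).indicator (fun q => ENNReal.ofReal (logplus (Norm.norm (Q (((q.1 * Real.sin q.2 : ℝ):ℂ) * Complex.exp (((q.2):ℂ) * Complex.I)))) * (1/(2*Real.pi) / ((q.1)^3 * Real.sin q.2^2)))) (r, θ) := hswap₂.symm
    _ = ∫⁻ r in Ioi R, ENNReal.ofReal (tsujiSmallM Q r / r ^ 2) :=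
        setLIntegral_congr_fun measurableSet_Ioi stepR
end
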